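/- arXiv:math/0303274 — 3 statements merged into one kernel-verified Lean document; each statement's English description precedes it below -/
import Mathlib

section
/- Let D(t) be the diagonal matrix with entries e^{φ_1 t}, …, e^{φ_n t} where φ_1 ≥ … ≥ φ_n, and let g ∈ GL(n,ℝ). Denote by e^{τ_1(t)} ≥ … ≥ e^{τ_n(t)} the eigenvalues of the positive definite matrix μ(t) = g D(t) gᵀ. Then for each j, lim_{t→+∞} τ_j(t)/t = φ_j. -/
open Matrix Filter Real

section lemmas
open Polynomial

private lemma eval_charpoly_eq {n : ℕ} (M : Matrix (Fin n) (Fin n) ℝ) (x : ℝ) :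
    (M.charpoly).eval x = det (x • (1 : Matrix (Fin n) (Fin n) ℝ) - M) := by
  rw [Matrix.charpoly, _root_.eval_det, matPolyEquiv_charmatrix]
  congr 1
  rw [Polynomial.eval_sub, Polynomial.eval_X, Polynomial.eval_C]
  congr 1
  rw [scalar_apply]
  ext i k
  by_cases h : i = k <;> simp [h, Matrix.one_apply, Matrix.diagonal_apply]

private lemma det_smul_one_sub_eq_prod {n : ℕ} (M : Matrix (Fin n) (Fin n) ℝ)
    (lam : Fin n → ℝ)
    (h : Multiset.ofList (List.ofFn fun j => lam j) = M.charpoly.roots) (x : ℝ) :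
    det (x • (1 : Matrix (Fin n) (Fin n) ℝ) - M) = ∏ j, (x - lam j) := by
  have hm := M.charpoly_monic
  have hdeg : M.charpoly.natDegree = n := by
    rw [M.charpoly_natDegree_eq_dim, Fintype.card_fin]
  have hcard : Multiset.card M.charpoly.roots = M.charpoly.natDegree := by
    rw [← h, hdeg]
    simp
  have hp := prod_multiset_X_sub_C_of_monic_of_roots_card_eq hm hcard
  rw [← eval_charpoly_eq]
  conv_lhs => rw [← hp]
  rw [Polynomial.eval_multiset_prod, ← h]
  simp only [Multiset.map_coe, List.map_ofFn]
  rw [Multiset.prod_coe, List.prod_ofFn]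
  simp [Function.comp]

private lemma det_smul_one_add_eq_prod {n : ℕ} (M : Matrix (Fin n) (Fin n) ℝ)
    (lam : Fin n → ℝ)
    (h : Multiset.ofList (List.ofFn fun j => lam j) = M.charpoly.roots) (x : ℝ) :
    det (x • (1 : Matrix (Fin n) (Fin n) ℝ) + M) = ∏ j, (x + lam j) := by
  have key := det_smul_one_sub_eq_prod M lam h (-x)
  have h1 : (-x) • (1 : Matrix (Fin n) (Fin n) ℝ) - M
      = -(x • (1 : Matrix (Fin n) (Fin n) ℝ) + M) := by
    rw [neg_smul, neg_add, sub_eq_add_neg]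
  rw [h1, Matrix.det_neg, Fintype.card_fin] at key
  have h2 : ∏ j, (-x - lam j) = (-1 : ℝ) ^ n * ∏ j, (x + lam j) := by
    calc ∏ j, (-x - lam j) = ∏ j, (-1 * (x + lam j)) :=
          Finset.prod_congr rfl fun j _ => by ring
      _ = (-1 : ℝ) ^ n * ∏ j, (x + lam j) := by
          rw [Finset.prod_mul_distrib, Finset.prod_const, Finset.card_univ, Fintype.card_fin]
  rw [h2] at key
  exact mul_left_cancel₀ (pow_ne_zero n (by norm_num)) key

end lemmas

private lemma abs_det_le_row_bounds {n : ℕ} (M : Matrix (Fin n) (Fin n) ℝ) (r : Fin n → ℝ)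
    (h : ∀ i k, |M i k| ≤ r i) :
    |M.det| ≤ (n.factorial : ℝ) * ∏ i, r i := by
  have hr : ∀ i, 0 ≤ r i := fun i => (abs_nonneg _).trans (h i i)
  calc |M.det| = |∑ σ : Equiv.Perm (Fin n), Equiv.Perm.sign σ • ∏ i, M (σ i) i| := by
        rw [Matrix.det_apply]
    _ ≤ ∑ σ : Equiv.Perm (Fin n), |Equiv.Perm.sign σ • ∏ i, M (σ i) i| :=
        Finset.abs_sum_le_sum_abs _ _
    _ ≤ ∑ _σ : Equiv.Perm (Fin n), ∏ i, r i := by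
        refine Finset.sum_le_sum fun σ _ => ?_
        have h1 : |Equiv.Perm.sign σ • ∏ i, M (σ i) i| = |∏ i, M (σ i) i| := by
          rcases Int.units_eq_one_or (Equiv.Perm.sign σ) with hs | hs <;>
            simp [hs, abs_neg]
        rw [h1, Finset.abs_prod]
        calc ∏ i, |M (σ i) i| ≤ ∏ i, r (σ i) :=
              Finset.prod_le_prod (fun i _ => abs_nonneg _) (fun i _ => h (σ i) i)
          _ = ∏ i, r i := Equiv.prod_comp σ r
    _ = (n.factorial : ℝ) * ∏ i, r i := by
        rw [Finset.sum_const, Finset.card_univ, Fintype.card_perm, Fintype.card_fin,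
          nsmul_eq_mul]

section specl
variable {n : ℕ}

private lemma det_conj_unitary (U : Matrix.unitaryGroup (Fin n) ℝ)
    (X : Matrix (Fin n) (Fin n) ℝ) :
    det ((U : Matrix (Fin n) (Fin n) ℝ) * X * star (U : Matrix (Fin n) (Fin n) ℝ)) = det X := by
  have h : det (U : Matrix (Fin n) (Fin n) ℝ) * det (star (U : Matrix (Fin n) (Fin n) ℝ)) = 1 := by
    rw [← Matrix.det_mul, (Matrix.mem_unitaryGroup_iff).mp U.2, Matrix.det_one]
  rw [Matrix.det_mul, Matrix.det_mul]
  linear_combination X.det * h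

private lemma one_le_det_one_add {Q : Matrix (Fin n) (Fin n) ℝ} (hQ : Q.PosSemidef) :
    1 ≤ det (1 + Q) := by
  have hH := hQ.1
  have hsp := hH.spectral_theorem
  rw [Unitary.conjStarAlgAut_apply] at hsp
  set U := hH.eigenvectorUnitary with hU
  have hUU : (U : Matrix (Fin n) (Fin n) ℝ) * star (U : Matrix (Fin n) (Fin n) ℝ) = 1 :=
    (Matrix.mem_unitaryGroup_iff).mp U.2
  have h1 : (1 : Matrix (Fin n) (Fin n) ℝ) + Q
      = (U : Matrix (Fin n) (Fin n) ℝ) * (1 + Matrix.diagonal (RCLike.ofReal ∘ hH.eigenvalues))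
        * star (U : Matrix (Fin n) (Fin n) ℝ) := by
    rw [Matrix.mul_add, Matrix.add_mul, Matrix.mul_one, hUU, ← hsp]
  have h2 : (1 : Matrix (Fin n) (Fin n) ℝ) + Matrix.diagonal (RCLike.ofReal ∘ hH.eigenvalues)
      = Matrix.diagonal (fun i => 1 + hH.eigenvalues i) := by
    ext i k
    by_cases hik : i = k <;> simp [hik, Matrix.one_apply, Matrix.diagonal_apply]
  rw [h1, det_conj_unitary, h2, Matrix.det_diagonal]
  calc (1:ℝ) = ∏ _i : Fin n, (1:ℝ) := by simp
    _ ≤ ∏ i, (1 + hH.eigenvalues i) :=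
        Finset.prod_le_prod (fun i _ => by norm_num)
          (fun i _ => by have := hQ.eigenvalues_nonneg i; linarith)

private lemma prod_le_det {d : Fin n → ℝ} (hd : ∀ i, 0 < d i)
    {A : Matrix (Fin n) (Fin n) ℝ} (h : (A - Matrix.diagonal d).PosSemidef) :
    ∏ i, d i ≤ det A := by
  set S := Matrix.diagonal (fun i => (Real.sqrt (d i))⁻¹) with hSdef
  have hsq : ∀ i, Real.sqrt (d i) ≠ 0 := fun i => (Real.sqrt_pos.mpr (hd i)).ne'
  have hS : Sᴴ = S := by
    rw [hSdef, Matrix.diagonal_conjTranspose]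
    congr 1
  have hQ := h.mul_mul_conjTranspose_same S
  rw [hS] at hQ
  have hSd : S * Matrix.diagonal d * S = 1 := by
    rw [hSdef, Matrix.diagonal_mul_diagonal, Matrix.diagonal_mul_diagonal]
    ext i k
    by_cases hik : i = k
    · subst hik
      simp only [Matrix.diagonal_apply_eq, Matrix.one_apply_eq]
      rw [← Real.mul_self_sqrt (hd i).le]
      field_simp
      rw [Real.sqrt_sq (Real.sqrt_nonneg _)]
      exact div_self (pow_ne_zero 2 (hsq i))
    · simp [Matrix.diagonal_apply, Matrix.one_apply, hik]
  have key : S * A * S = 1 + S * (A - Matrix.diagonal d) * S := by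
    rw [Matrix.mul_sub, Matrix.sub_mul, hSd]
    abel
  have h1 : 1 ≤ det (S * A * S) := by
    rw [key]; exact one_le_det_one_add hQ
  have hdetS : det S = ∏ i, (Real.sqrt (d i))⁻¹ := by rw [hSdef, Matrix.det_diagonal]
  rw [Matrix.det_mul, Matrix.det_mul, hdetS] at h1
  have hsv : (∏ i, (Real.sqrt (d i))⁻¹) * (∏ i, (Real.sqrt (d i))⁻¹) = (∏ i, d i)⁻¹ := by
    rw [← Finset.prod_mul_distrib, ← Finset.prod_inv_distrib]
    refine Finset.prod_congr rfl fun i _ => ?_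
    rw [← mul_inv, Real.mul_self_sqrt (hd i).le]
  have h1' : (1:ℝ) ≤ det A * (∏ i, d i)⁻¹ := by
    calc (1:ℝ) ≤ (∏ i, (Real.sqrt (d i))⁻¹) * A.det * ∏ i, (Real.sqrt (d i))⁻¹ := h1
      _ = det A * ((∏ i, (Real.sqrt (d i))⁻¹) * (∏ i, (Real.sqrt (d i))⁻¹)) := by ring
      _ = det A * (∏ i, d i)⁻¹ := by rw [hsv]
  have hpd : (0:ℝ) < ∏ i, d i := Finset.prod_pos fun i _ => hd i
  calc ∏ i, d i = 1 * ∏ i, d i := (one_mul _).symm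
    _ ≤ det A * (∏ i, d i)⁻¹ * ∏ i, d i := mul_le_mul_of_nonneg_right h1' hpd.le
    _ = det A := by field_simp

private lemma posSemidef_smul {P : Matrix (Fin n) (Fin n) ℝ} (hP : P.PosSemidef)
    {c : ℝ} (hc : 0 ≤ c) : (c • P).PosSemidef := by
  refine Matrix.posSemidef_iff_dotProduct_mulVec.mpr ⟨?_, fun x => ?_⟩
  · unfold Matrix.IsHermitian
    rw [Matrix.conjTranspose_smul, hP.1.eq]
    simp
  · rw [Matrix.smul_mulVec, dotProduct_smul, smul_eq_mul]
    exact mul_nonneg hc (hP.dotProduct_mulVec_nonneg x)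

private lemma exists_smul_one_le [Nonempty (Fin n)] {B : Matrix (Fin n) (Fin n) ℝ}
    (hB : B.PosDef) : ∃ β : ℝ, 0 < β ∧ (B - β • 1).PosSemidef := by
  have hH := hB.1
  obtain ⟨i0, -, hi0⟩ := Finset.exists_min_image Finset.univ hH.eigenvalues
    ⟨Classical.arbitrary _, Finset.mem_univ _⟩
  refine ⟨hH.eigenvalues i0, hB.eigenvalues_pos i0, ?_⟩
  set β := hH.eigenvalues i0
  have hsp := hH.spectral_theorem
  rw [Unitary.conjStarAlgAut_apply] at hsp
  set U := hH.eigenvectorUnitary with hU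
  have hUU : (U : Matrix (Fin n) (Fin n) ℝ) * star (U : Matrix (Fin n) (Fin n) ℝ) = 1 :=
    (Matrix.mem_unitaryGroup_iff).mp U.2
  have h2 : Matrix.diagonal (RCLike.ofReal ∘ hH.eigenvalues) - β • (1 : Matrix (Fin n) (Fin n) ℝ)
      = Matrix.diagonal (fun k => hH.eigenvalues k - β) := by
    ext i k
    by_cases hik : i = k <;> simp [hik, Matrix.one_apply, Matrix.diagonal_apply]
  have h1 : B - β • 1
      = (U : Matrix (Fin n) (Fin n) ℝ) * Matrix.diagonal (fun k => hH.eigenvalues k - β)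
        * star (U : Matrix (Fin n) (Fin n) ℝ) := by
    rw [← h2, Matrix.mul_sub, Matrix.sub_mul, ← hsp]
    congr 1
    rw [Matrix.mul_smul, Matrix.mul_one, Matrix.smul_mul, hUU]
  rw [h1]
  have hdiag : (Matrix.diagonal (fun k => hH.eigenvalues k - β)).PosSemidef :=
    Matrix.posSemidef_diagonal_iff.mpr fun k => sub_nonneg.mpr (hi0 k (Finset.mem_univ k))
  have := hdiag.mul_mul_conjTranspose_same (U : Matrix (Fin n) (Fin n) ℝ)
  simpa [Matrix.star_eq_conjTranspose] using this

private lemma posDef_transpose_mul_self {g : Matrix (Fin n) (Fin n) ℝ} (hg : IsUnit g) :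
    (gᵀ * g).PosDef := by
  have e : ∀ (A : Matrix (Fin n) (Fin n) ℝ), Aᴴ = Aᵀ := fun A => by
    ext i k; simp [Matrix.conjTranspose_apply]
  refine Matrix.posDef_iff_dotProduct_mulVec.mpr ⟨?_, fun x hx => ?_⟩
  · have := Matrix.isHermitian_conjTranspose_mul_self g
    rwa [e] at this
  · have hinj := Matrix.mulVec_injective_iff_isUnit.mpr hg
    have hx' : g *ᵥ x ≠ 0 := by
      intro h0
      exact hx (hinj (by simpa using h0))
    have hsx : star x = x := funext fun i => star_trivial _
    rw [← Matrix.mulVec_mulVec, Matrix.dotProduct_mulVec, Matrix.vecMul_transpose, hsx]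
    have := dotProduct_star_self_pos_iff.mpr hx'
    rwa [show star (g *ᵥ x) = g *ᵥ x from funext fun i => star_trivial _] at this

private lemma posDef_inv_mul_inv_transpose {g : Matrix (Fin n) (Fin n) ℝ} (hg : IsUnit g) :
    (g⁻¹ * g⁻¹ᵀ).PosDef := by
  have h1 : g⁻¹ * g⁻¹ᵀ = (gᵀ * g)⁻¹ := by
    rw [Matrix.mul_inv_rev, Matrix.transpose_nonsing_inv]
  rw [h1]
  exact (posDef_transpose_mul_self hg).inv

end specl

section helpers

variable {s δ : ℝ}

-- g x = max (s+δ) x - max s x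
private lemma gfun_nonneg (hδ : 0 ≤ δ) (x : ℝ) : 0 ≤ max (s + δ) x - max s x :=
  sub_nonneg.mpr (max_le_max (by linarith) le_rfl)

private lemma gfun_le (hδ : 0 ≤ δ) (x : ℝ) : max (s + δ) x - max s x ≤ δ := by
  have : max (s + δ) x ≤ max s x + δ :=
    max_le (by linarith [le_max_left s x]) (by linarith [le_max_right s x])
  linarith

private lemma gfun_anti (hδ : 0 ≤ δ) {x y : ℝ} (hxy : x ≤ y) :
    max (s + δ) y - max s y ≤ max (s + δ) x - max s x := by
  rcases le_total y (s + δ) with hy | hy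
  · have h1 : max (s + δ) y = s + δ := max_eq_left hy
    have h2 : max (s + δ) x = s + δ := max_eq_left (hxy.trans hy)
    have h3 : max s x ≤ max s y := max_le_max le_rfl hxy
    linarith
  · have h1 : max (s + δ) y = y := max_eq_right hy
    have h2 : max s y = y := max_eq_right (by linarith)
    have h3 : max s x ≤ max (s + δ) x := max_le_max (by linarith) le_rfl
    linarith

private lemma gfun_eq_of_le (hδ : 0 ≤ δ) {x : ℝ} (hx : x ≤ s) :
    max (s + δ) x - max s x = δ := by
  rw [max_eq_left hx, max_eq_left (by linarith)]
  ring

private lemma gfun_zero_of_ge (hδ : 0 ≤ δ) {x : ℝ} (hx : s + δ ≤ x) :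
    max (s + δ) x - max s x = 0 := by
  rw [max_eq_right hx, max_eq_right (by linarith)]
  ring

-- h x = min s x - min (s - δ) x
private lemma hfun_nonneg (hδ : 0 ≤ δ) (x : ℝ) : 0 ≤ min s x - min (s - δ) x :=
  sub_nonneg.mpr (min_le_min (by linarith) le_rfl)

private lemma hfun_le (hδ : 0 ≤ δ) (x : ℝ) : min s x - min (s - δ) x ≤ δ := by
  have : min s x ≤ min (s - δ) x + δ := by
    rcases le_total (s - δ) x with h | h
    · rw [min_eq_left h]
      linarith [min_le_left s x]
    · rw [min_eq_right h]
      linarith [min_le_right s x]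
  linarith

private lemma hfun_mono (hδ : 0 ≤ δ) {x y : ℝ} (hxy : x ≤ y) :
    min s x - min (s - δ) x ≤ min s y - min (s - δ) y := by
  rcases le_total (s - δ) x with hx | hx
  · have h1 : min (s - δ) x = s - δ := min_eq_left hx
    have h2 : min (s - δ) y = s - δ := min_eq_left (hx.trans hxy)
    have h3 : min s x ≤ min s y := min_le_min le_rfl hxy
    linarith
  · have h1 : min (s - δ) x = x := min_eq_right hx
    have h2 : min s x = x := min_eq_right (by linarith)
    have h3 : min (s - δ) y ≤ min s y := min_le_min (by linarith) le_rfl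
    linarith

private lemma hfun_eq_of_ge (hδ : 0 ≤ δ) {x : ℝ} (hx : s ≤ x) :
    min s x - min (s - δ) x = δ := by
  rw [min_eq_left hx, min_eq_left (by linarith)]
  ring

private lemma hfun_zero_of_le (hδ : 0 ≤ δ) {x : ℝ} (hx : x ≤ s - δ) :
    min s x - min (s - δ) x = 0 := by
  rw [min_eq_right hx, min_eq_right (by linarith)]
  ring

end helpers

private lemma recover {n : ℕ} (φ : Fin n → ℝ) (hφ : Antitone φ)
    (u : ℝ → Fin n → ℝ) (hu : ∀ᶠ t in atTop, Antitone (u t))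
    (hmax : ∀ s : ℝ, Tendsto (fun t => ∑ i, max s (u t i)) atTop (nhds (∑ i, max s (φ i))))
    (hsum : Tendsto (fun t => ∑ i, u t i) atTop (nhds (∑ i, φ i)))
    (j : Fin n) : Tendsto (fun t => u t j) atTop (nhds (φ j)) := by
  classical
  have hmin : ∀ s : ℝ, Tendsto (fun t => ∑ i, min s (u t i)) atTop
      (nhds (∑ i, min s (φ i))) := by
    intro s
    have hid : ∀ v : Fin n → ℝ, ∑ i, min s (v i)
        = ((∑ _i : Fin n, s) + ∑ i, v i) - ∑ i, max s (v i) := by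
      intro v
      rw [← Finset.sum_add_distrib, ← Finset.sum_sub_distrib]
      refine Finset.sum_congr rfl fun i _ => ?_
      have := min_add_max s (v i)
      linarith
    have h1 : Tendsto (fun t => ((∑ _i : Fin n, s) + ∑ i, u t i) - ∑ i, max s (u t i)) atTop
        (nhds (((∑ _i : Fin n, s) + ∑ i, φ i) - ∑ i, max s (φ i))) :=
      (tendsto_const_nhds.add hsum).sub (hmax s)
    rw [hid φ]
    exact h1.congr fun t => (hid (u t)).symm
  rw [Metric.tendsto_nhds]
  intro ε hε
  set δ := ε / 2 with hδdef
  have hδ : 0 < δ := by positivity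
  -- lower bound: eventually φ j - ε < u t j
  have hlow : ∀ᶠ t in atTop, φ j - ε < u t j := by
    set s := φ j - ε with hsdef
    set A1 : Finset (Fin n) := Finset.univ.filter (fun i => j < i) with hA1
    have hjA1 : j ∉ A1 := by simp [hA1]
    set A2 : Finset (Fin n) := insert j A1 with hA2
    have hcard : (A2.card : ℝ) = (A1.card : ℝ) + 1 := by
      rw [hA2, Finset.card_insert_of_notMem hjA1]
      push_cast
      ring
    have hFten : Tendsto (fun t => (∑ i, max (s + δ) (u t i)) - ∑ i, max s (u t i)) atTop
        (nhds ((∑ i, max (s + δ) (φ i)) - ∑ i, max s (φ i))) := (hmax (s + δ)).sub (hmax s)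
    have hL : (∑ i, max (s + δ) (φ i)) - ∑ i, max s (φ i) < (A1.card : ℝ) * δ + δ / 2 := by
      have hLe : (∑ i, max (s + δ) (φ i)) - ∑ i, max s (φ i)
          = ∑ i, (max (s + δ) (φ i) - max s (φ i)) := by rw [Finset.sum_sub_distrib]
      rw [hLe]
      have hvanish : ∀ i ∈ Finset.univ, i ∉ A1 → max (s + δ) (φ i) - max s (φ i) = 0 := by
        intro i _ hiA
        have hij : i ≤ j := by
          by_contra hc
          exact hiA (by simp [hA1, lt_of_not_ge hc])
        have : φ j ≤ φ i := hφ hij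
        refine gfun_zero_of_ge hδ.le ?_
        rw [hsdef, hδdef]
        linarith
      rw [← Finset.sum_subset (Finset.subset_univ A1) hvanish]
      have : ∑ i ∈ A1, (max (s + δ) (φ i) - max s (φ i)) ≤ (A1.card : ℝ) * δ := by
        rw [← nsmul_eq_mul]
        exact Finset.sum_le_card_nsmul A1 _ δ fun i _ => gfun_le hδ.le (φ i)
      linarith
    have hev := hFten.eventually_lt_const hL
    filter_upwards [hev, hu] with t hFt hant
    by_contra hc
    push_neg at hc
    have hujs : u t j ≤ s := by rw [hsdef]; linarith
    have hbig : ∀ i ∈ A2, u t i ≤ s := by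
      intro i hi
      have hji : j ≤ i := by
        rcases Finset.mem_insert.mp hi with h | h
        · exact h.symm.le
        · exact (Finset.mem_filter.mp h).2.le
      exact (hant hji).trans hujs
    have h1 : (A2.card : ℝ) * δ ≤ ∑ i ∈ A2, (max (s + δ) (u t i) - max s (u t i)) := by
      rw [← nsmul_eq_mul]
      refine Finset.card_nsmul_le_sum A2 _ δ fun i hi => ?_
      rw [gfun_eq_of_le hδ.le (hbig i hi)]
    have h2 : ∑ i ∈ A2, (max (s + δ) (u t i) - max s (u t i))
        ≤ ∑ i, (max (s + δ) (u t i) - max s (u t i)) :=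
      Finset.sum_le_sum_of_subset_of_nonneg (Finset.subset_univ A2)
        (fun i _ _ => gfun_nonneg hδ.le (u t i))
    rw [← Finset.sum_sub_distrib] at hFt
    rw [hcard] at h1
    have : (A1.card : ℝ) * δ + δ < (A1.card : ℝ) * δ + δ / 2 := by
      calc (A1.card : ℝ) * δ + δ = ((A1.card : ℝ) + 1) * δ := by ring
        _ ≤ ∑ i ∈ A2, (max (s + δ) (u t i) - max s (u t i)) := h1
        _ ≤ ∑ i, (max (s + δ) (u t i) - max s (u t i)) := h2
        _ < (A1.card : ℝ) * δ + δ / 2 := hFt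
    linarith
  -- upper bound: eventually u t j < φ j + ε
  have hup : ∀ᶠ t in atTop, u t j < φ j + ε := by
    set s := φ j + ε with hsdef
    set A1 : Finset (Fin n) := Finset.univ.filter (fun i => i < j) with hA1
    have hjA1 : j ∉ A1 := by simp [hA1]
    set A2 : Finset (Fin n) := insert j A1 with hA2
    have hcard : (A2.card : ℝ) = (A1.card : ℝ) + 1 := by
      rw [hA2, Finset.card_insert_of_notMem hjA1]
      push_cast
      ring
    have hFten : Tendsto (fun t => (∑ i, min s (u t i)) - ∑ i, min (s - δ) (u t i)) atTop
        (nhds ((∑ i, min s (φ i)) - ∑ i, min (s - δ) (φ i))) := (hmin s).sub (hmin (s - δ))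
    have hL : (∑ i, min s (φ i)) - ∑ i, min (s - δ) (φ i) < (A1.card : ℝ) * δ + δ / 2 := by
      have hLe : (∑ i, min s (φ i)) - ∑ i, min (s - δ) (φ i)
          = ∑ i, (min s (φ i) - min (s - δ) (φ i)) := by rw [Finset.sum_sub_distrib]
      rw [hLe]
      have hvanish : ∀ i ∈ Finset.univ, i ∉ A1 → min s (φ i) - min (s - δ) (φ i) = 0 := by
        intro i _ hiA
        have hij : j ≤ i := by
          by_contra hc
          exact hiA (by simp [hA1, lt_of_not_ge hc])
        have : φ i ≤ φ j := hφ hij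
        refine hfun_zero_of_le hδ.le ?_
        rw [hsdef, hδdef]
        linarith
      rw [← Finset.sum_subset (Finset.subset_univ A1) hvanish]
      have : ∑ i ∈ A1, (min s (φ i) - min (s - δ) (φ i)) ≤ (A1.card : ℝ) * δ := by
        rw [← nsmul_eq_mul]
        exact Finset.sum_le_card_nsmul A1 _ δ fun i _ => hfun_le hδ.le (φ i)
      linarith
    have hev := hFten.eventually_lt_const hL
    filter_upwards [hev, hu] with t hFt hant
    by_contra hc
    push_neg at hc
    have hujs : s ≤ u t j := by rw [hsdef]; linarith
    have hbig : ∀ i ∈ A2, s ≤ u t i := by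
      intro i hi
      have hji : i ≤ j := by
        rcases Finset.mem_insert.mp hi with h | h
        · exact h.le
        · exact (Finset.mem_filter.mp h).2.le
      exact hujs.trans (hant hji)
    have h1 : (A2.card : ℝ) * δ ≤ ∑ i ∈ A2, (min s (u t i) - min (s - δ) (u t i)) := by
      rw [← nsmul_eq_mul]
      refine Finset.card_nsmul_le_sum A2 _ δ fun i hi => ?_
      rw [hfun_eq_of_ge hδ.le (hbig i hi)]
    have h2 : ∑ i ∈ A2, (min s (u t i) - min (s - δ) (u t i))
        ≤ ∑ i, (min s (u t i) - min (s - δ) (u t i)) :=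
      Finset.sum_le_sum_of_subset_of_nonneg (Finset.subset_univ A2)
        (fun i _ _ => hfun_nonneg hδ.le (u t i))
    rw [← Finset.sum_sub_distrib] at hFt
    rw [hcard] at h1
    have : (A1.card : ℝ) * δ + δ < (A1.card : ℝ) * δ + δ / 2 := by
      calc (A1.card : ℝ) * δ + δ = ((A1.card : ℝ) + 1) * δ := by ring
        _ ≤ ∑ i ∈ A2, (min s (u t i) - min (s - δ) (u t i)) := h1
        _ ≤ ∑ i, (min s (u t i) - min (s - δ) (u t i)) := h2
        _ < (A1.card : ℝ) * δ + δ / 2 := hFt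
    linarith
  filter_upwards [hlow, hup] with t h1 h2
  rw [Real.dist_eq, abs_lt]
  constructor <;> linarith


/-- Let `μ(t) = g D(t) gᵀ` with `D(t) = diag(e^{φ₁ t},…,e^{φₙ t})`, `φ₁ ≥ … ≥ φₙ`,
and `g` invertible. If `e^{τ₁(t)} ≥ … ≥ e^{τₙ(t)}` are the eigenvalues of `μ(t)`,
then `τⱼ(t)/t → φⱼ` as `t → +∞`. -/
theorem eigenvalue_growth_of_geodesic (n : ℕ)
    (φ : Fin n → ℝ) (hφ : Antitone φ)
    (g : Matrix (Fin n) (Fin n) ℝ) (hg : IsUnit g)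
    (μ : ℝ → Matrix (Fin n) (Fin n) ℝ)
    (hμ : ∀ t : ℝ, μ t = g * Matrix.diagonal (fun i => Real.exp (φ i * t)) * gᵀ)
    (τ : ℝ → Fin n → ℝ)
    (hτa : ∀ t, Antitone (τ t))
    (hτ : ∀ t, Multiset.ofList (List.ofFn fun j => Real.exp (τ t j))
            = (μ t).charpoly.roots) :
    ∀ j : Fin n, Tendsto (fun t => τ t j / t) atTop (nhds (φ j)) := by
  classical
  intro j
  haveI : Nonempty (Fin n) := ⟨j⟩
  -- basic invertibility facts
  have hdg : IsUnit g.det := (Matrix.isUnit_iff_isUnit_det g).mp hg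
  have hgi : g * g⁻¹ = 1 := Matrix.mul_nonsing_inv g hdg
  have hdetg2 : (0:ℝ) < det g ^ 2 :=
    lt_of_le_of_ne (sq_nonneg _) (Ne.symm (pow_ne_zero _ hdg.ne_zero))
  set B : Matrix (Fin n) (Fin n) ℝ := g⁻¹ * g⁻¹ᵀ with hBdef
  have hgBg : g * B * gᵀ = 1 := by
    calc g * (g⁻¹ * g⁻¹ᵀ) * gᵀ = (g * g⁻¹) * (g⁻¹ᵀ * gᵀ) := by
          rw [← Matrix.mul_assoc, Matrix.mul_assoc (g * g⁻¹)]
      _ = 1 := by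
          rw [← Matrix.transpose_mul, hgi, Matrix.transpose_one, Matrix.mul_one]
  have hBpd : B.PosDef := posDef_inv_mul_inv_transpose hg
  obtain ⟨β, hβ0, hβ⟩ := exists_smul_one_le hBpd
  -- entrywise bound for B
  set b : ℝ := ∑ i, ∑ k, |B i k| with hbdef
  have hb0 : 0 ≤ b := Finset.sum_nonneg fun i _ => Finset.sum_nonneg fun k _ => abs_nonneg _
  have hb : ∀ i k, |B i k| ≤ b := by
    intro i k
    calc |B i k| ≤ ∑ k', |B i k'| :=
          Finset.single_le_sum (f := fun k' => |B i k'|) (fun k' _ => abs_nonneg _)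
            (Finset.mem_univ k)
      _ ≤ b :=
          Finset.single_le_sum (f := fun i => ∑ k', |B i k'|)
            (fun i' _ => Finset.sum_nonneg fun k' _ => abs_nonneg _) (Finset.mem_univ i)
  -- the product formula
  have hprod : ∀ t x : ℝ, det (x • (1 : Matrix (Fin n) (Fin n) ℝ) + μ t)
      = ∏ j', (x + Real.exp (τ t j')) :=
    fun t x => det_smul_one_add_eq_prod (μ t) _ (hτ t) x
  have hfact : ∀ x t : ℝ, x • (1 : Matrix (Fin n) (Fin n) ℝ) + μ t
      = g * (x • B + Matrix.diagonal (fun i => Real.exp (φ i * t))) * gᵀ := by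
    intro x t
    rw [hμ t, Matrix.mul_add, Matrix.add_mul, Matrix.mul_smul, Matrix.smul_mul, hgBg]
  have hdet2 : ∀ x t : ℝ, det (x • (1 : Matrix (Fin n) (Fin n) ℝ) + μ t)
      = det g ^ 2 * det (x • B + Matrix.diagonal (fun i => Real.exp (φ i * t))) := by
    intro x t
    rw [hfact x t, Matrix.det_mul, Matrix.det_mul, Matrix.det_transpose]
    ring
  have hprodexp : ∀ (c : ℝ) (f : Fin n → ℝ), (∏ _i : Fin n, c) * Real.exp (∑ i, f i)
      = ∏ i, (c * Real.exp (f i)) := by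
    intro c f
    rw [Real.exp_sum, ← Finset.prod_mul_distrib]
  -- main determinant bounds
  have key : ∀ s t : ℝ, 0 ≤ t →
      det g ^ 2 * ((min β 1) ^ n * Real.exp (t * ∑ i, max s (φ i)))
        ≤ ∏ j', (Real.exp (s * t) + Real.exp (τ t j'))
      ∧ ∏ j', (Real.exp (s * t) + Real.exp (τ t j'))
        ≤ det g ^ 2 * ((n.factorial : ℝ) * (b + 1) ^ n * Real.exp (t * ∑ i, max s (φ i))) := by
    intro s t ht
    set x : ℝ := Real.exp (s * t) with hxdef
    have hx : 0 < x := Real.exp_pos _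
    set D : Matrix (Fin n) (Fin n) ℝ := Matrix.diagonal (fun i => Real.exp (φ i * t)) with hDdef
    have hkey1 : ∏ j', (x + Real.exp (τ t j')) = det g ^ 2 * det (x • B + D) := by
      rw [← hprod t x, hdet2 x t]
    have hmaxbound : ∀ i : Fin n, Real.exp (φ i * t) ≤ Real.exp (t * max s (φ i)) := by
      intro i
      refine Real.exp_le_exp.mpr ?_
      rw [mul_comm]
      exact mul_le_mul_of_nonneg_left (le_max_right s (φ i)) ht
    have hxbound : ∀ i : Fin n, x ≤ Real.exp (t * max s (φ i)) := by
      intro i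
      rw [hxdef]
      refine Real.exp_le_exp.mpr ?_
      rw [mul_comm]
      exact mul_le_mul_of_nonneg_left (le_max_left s (φ i)) ht
    constructor
    · -- lower bound
      rw [hkey1]
      have hN : ∀ i : Fin n, 0 < β * x + Real.exp (φ i * t) := fun i => by positivity
      have hpsd : ((x • B + D) - Matrix.diagonal (fun i => β * x + Real.exp (φ i * t))).PosSemidef := by
        have hdecomp : Matrix.diagonal (fun i => β * x + Real.exp (φ i * t))
            = (β * x) • (1 : Matrix (Fin n) (Fin n) ℝ) + D := by
          rw [hDdef]
          ext i k
          by_cases hik : i = k <;>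
            simp [hik, Matrix.diagonal_apply, Matrix.one_apply, Matrix.add_apply]
        have heq : (x • B + D) - Matrix.diagonal (fun i => β * x + Real.exp (φ i * t))
            = x • (B - β • (1 : Matrix (Fin n) (Fin n) ℝ)) := by
          rw [hdecomp, smul_sub, smul_smul, mul_comm x β]
          abel
        rw [heq]
        exact posSemidef_smul hβ hx.le
      have h1 : ∏ i, (β * x + Real.exp (φ i * t)) ≤ det (x • B + D) := prod_le_det hN hpsd
      have h2 : (min β 1) ^ n * Real.exp (t * ∑ i, max s (φ i))
          ≤ ∏ i, (β * x + Real.exp (φ i * t)) := by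
        have hrw : (min β 1) ^ n * Real.exp (t * ∑ i, max s (φ i))
            = ∏ i, (min β 1 * Real.exp (t * max s (φ i))) := by
          rw [← hprodexp, Finset.prod_const, Finset.card_univ, Fintype.card_fin,
            Finset.mul_sum]
        rw [hrw]
        refine Finset.prod_le_prod (fun i _ => by positivity) (fun i _ => ?_)
        rcases le_total s (φ i) with hs | hs
        · have hmax : max s (φ i) = φ i := max_eq_right hs
          rw [hmax]
          have : Real.exp (t * φ i) = Real.exp (φ i * t) := by rw [mul_comm]
          rw [this]
          nlinarith [Real.exp_pos (φ i * t), min_le_right β 1, mul_pos hβ0 hx,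
            Real.exp_pos (φ i * t)]
        · have hmax : max s (φ i) = s := max_eq_left hs
          rw [hmax]
          have hxx : Real.exp (t * s) = x := by rw [hxdef, mul_comm]
          rw [hxx]
          nlinarith [Real.exp_pos (φ i * t), min_le_left β 1, hx]
      calc det g ^ 2 * ((min β 1) ^ n * Real.exp (t * ∑ i, max s (φ i)))
          ≤ det g ^ 2 * ∏ i, (β * x + Real.exp (φ i * t)) :=
            mul_le_mul_of_nonneg_left h2 hdetg2.le
        _ ≤ det g ^ 2 * det (x • B + D) := mul_le_mul_of_nonneg_left h1 hdetg2.le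
    · -- upper bound
      rw [hkey1]
      have hentry : ∀ i k : Fin n, |(x • B + D) i k| ≤ (b + 1) * Real.exp (t * max s (φ i)) := by
        intro i k
        have h1 : (x • B + D) i k = x * B i k + (if i = k then Real.exp (φ i * t) else 0) := by
          rw [hDdef]
          simp [Matrix.add_apply, Matrix.smul_apply, Matrix.diagonal_apply, smul_eq_mul]
        rw [h1]
        have h2 : |x * B i k + (if i = k then Real.exp (φ i * t) else 0)|
            ≤ x * b + Real.exp (φ i * t) := by
          refine (abs_add_le _ _).trans (add_le_add ?_ ?_)
          · rw [abs_mul, abs_of_pos hx]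
            exact mul_le_mul_of_nonneg_left (hb i k) hx.le
          · split
            · rw [abs_of_pos (Real.exp_pos _)]
            · simpa using (Real.exp_pos (φ i * t)).le
        refine h2.trans ?_
        calc x * b + Real.exp (φ i * t)
            ≤ Real.exp (t * max s (φ i)) * b + Real.exp (t * max s (φ i)) :=
              add_le_add (mul_le_mul_of_nonneg_right (hxbound i) hb0) (hmaxbound i)
          _ = (b + 1) * Real.exp (t * max s (φ i)) := by ring
      have h3 := abs_det_le_row_bounds (x • B + D) _ hentry
      have h4 : det (x • B + D) ≤ |det (x • B + D)| := le_abs_self _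
      have h5 : (n.factorial : ℝ) * ∏ i, ((b + 1) * Real.exp (t * max s (φ i)))
          = (n.factorial : ℝ) * (b + 1) ^ n * Real.exp (t * ∑ i, max s (φ i)) := by
        rw [← hprodexp, Finset.prod_const, Finset.card_univ, Fintype.card_fin, Finset.mul_sum]
        ring
      calc det g ^ 2 * det (x • B + D) ≤ det g ^ 2 * |det (x • B + D)| :=
            mul_le_mul_of_nonneg_left h4 hdetg2.le
        _ ≤ det g ^ 2 * ((n.factorial : ℝ) * ∏ i, ((b + 1) * Real.exp (t * max s (φ i)))) :=
            mul_le_mul_of_nonneg_left h3 hdetg2.le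
        _ = det g ^ 2 * ((n.factorial : ℝ) * (b + 1) ^ n * Real.exp (t * ∑ i, max s (φ i))) := by
            rw [h5]
  -- constants
  set c : ℝ := det g ^ 2 * (min β 1) ^ n with hcdef
  set C : ℝ := det g ^ 2 * ((n.factorial : ℝ) * (b + 1) ^ n) with hCdef
  have hminβ : (0:ℝ) < min β 1 := lt_min hβ0 one_pos
  have hc : 0 < c := mul_pos hdetg2 (pow_pos hminβ n)
  have hC : 0 < C := by
    refine mul_pos hdetg2 (mul_pos ?_ ?_)
    · exact_mod_cast Nat.cast_pos.mpr n.factorial_pos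
    · positivity
  have h2n : (0:ℝ) < 2 ^ n := by positivity
  -- the max-sum limits
  have hmaxu : ∀ s : ℝ, Tendsto (fun t => ∑ i, max s (τ t i / t)) atTop
      (nhds (∑ i, max s (φ i))) := by
    intro s
    set G : ℝ := ∑ i, max s (φ i) with hGdef
    have hbound : ∀ t : ℝ, 1 ≤ t →
        (Real.log c - Real.log (2 ^ n)) / t + G ≤ ∑ i, max s (τ t i / t)
        ∧ ∑ i, max s (τ t i / t) ≤ Real.log C / t + G := by
      intro t ht
      have ht0 : (0:ℝ) < t := lt_of_lt_of_le one_pos ht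
      obtain ⟨hlo, hhi⟩ := key s t ht0.le
      have hlo' : c * Real.exp (t * G) ≤ ∏ j', (Real.exp (s * t) + Real.exp (τ t j')) := by
        calc c * Real.exp (t * G)
            = det g ^ 2 * ((min β 1) ^ n * Real.exp (t * G)) := by rw [hcdef]; ring
          _ ≤ _ := hlo
      have hhi' : ∏ j', (Real.exp (s * t) + Real.exp (τ t j')) ≤ C * Real.exp (t * G) := by
        calc ∏ j', (Real.exp (s * t) + Real.exp (τ t j'))
            ≤ det g ^ 2 * ((n.factorial : ℝ) * (b + 1) ^ n * Real.exp (t * G)) := hhi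
          _ = C * Real.exp (t * G) := by rw [hCdef]; ring
      have hexp1 : Real.exp (∑ i, max (s * t) (τ t i))
          ≤ ∏ j', (Real.exp (s * t) + Real.exp (τ t j')) := by
        rw [Real.exp_sum]
        refine Finset.prod_le_prod (fun i _ => (Real.exp_pos _).le) (fun i _ => ?_)
        rcases le_total (s * t) (τ t i) with h | h
        · rw [max_eq_right h]
          linarith [Real.exp_pos (s * t)]
        · rw [max_eq_left h]
          linarith [Real.exp_pos (τ t i)]
      have hexp2 : ∏ j', (Real.exp (s * t) + Real.exp (τ t j'))
          ≤ 2 ^ n * Real.exp (∑ i, max (s * t) (τ t i)) := by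
        rw [Real.exp_sum]
        have h2 : (2:ℝ) ^ n * ∏ i, Real.exp (max (s * t) (τ t i))
            = ∏ i, (2 * Real.exp (max (s * t) (τ t i))) := by
          rw [Finset.prod_mul_distrib, Finset.prod_const, Finset.card_univ, Fintype.card_fin]
        rw [h2]
        refine Finset.prod_le_prod (fun i _ => by positivity) (fun i _ => ?_)
        rcases le_total (s * t) (τ t i) with h | h
        · rw [max_eq_right h]
          have := Real.exp_le_exp.mpr h
          linarith
        · rw [max_eq_left h]
          have := Real.exp_le_exp.mpr h
          linarith
      have hub : ∑ i, max (s * t) (τ t i) ≤ Real.log C + t * G := by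
        have : Real.exp (∑ i, max (s * t) (τ t i)) ≤ Real.exp (Real.log C + t * G) := by
          rw [Real.exp_add, Real.exp_log hC]
          exact hexp1.trans hhi'
        exact Real.exp_le_exp.mp this
      have hlb : Real.log c + t * G ≤ Real.log (2 ^ n) + ∑ i, max (s * t) (τ t i) := by
        have : Real.exp (Real.log c + t * G)
            ≤ Real.exp (Real.log (2 ^ n) + ∑ i, max (s * t) (τ t i)) := by
          rw [Real.exp_add, Real.exp_add, Real.exp_log hc, Real.exp_log h2n]
          exact hlo'.trans hexp2
        exact Real.exp_le_exp.mp this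
      have hmdiv : (∑ i, max (s * t) (τ t i)) / t = ∑ i, max s (τ t i / t) := by
        rw [Finset.sum_div]
        refine Finset.sum_congr rfl fun i _ => ?_
        rw [← max_div_div_right ht0.le, mul_div_cancel_right₀ _ ht0.ne']
      constructor
      · rw [← hmdiv]
        have h3 : (Real.log c - Real.log (2 ^ n) + t * G) / t
            ≤ (∑ i, max (s * t) (τ t i)) / t := by
          refine (div_le_div_iff_of_pos_right ht0).mpr ?_
          linarith
        calc (Real.log c - Real.log (2 ^ n)) / t + G
            = (Real.log c - Real.log (2 ^ n) + t * G) / t := by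
              field_simp
          _ ≤ _ := h3
      · rw [← hmdiv]
        have h3 : (∑ i, max (s * t) (τ t i)) / t ≤ (Real.log C + t * G) / t :=
          (div_le_div_iff_of_pos_right ht0).mpr hub
        calc (∑ i, max (s * t) (τ t i)) / t ≤ (Real.log C + t * G) / t := h3
          _ = Real.log C / t + G := by
              field_simp
    have h1 : Tendsto (fun t : ℝ => Real.log C / t + G) atTop (nhds (0 + G)) :=
      (Tendsto.div_atTop tendsto_const_nhds tendsto_id).add tendsto_const_nhds
    have h2 : Tendsto (fun t : ℝ => (Real.log c - Real.log (2 ^ n)) / t + G) atTop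
        (nhds (0 + G)) :=
      (Tendsto.div_atTop tendsto_const_nhds tendsto_id).add tendsto_const_nhds
    rw [zero_add] at h1 h2
    refine tendsto_of_tendsto_of_tendsto_of_le_of_le' h2 h1 ?_ ?_
    · filter_upwards [eventually_ge_atTop (1:ℝ)] with t ht using (hbound t ht).1
    · filter_upwards [eventually_ge_atTop (1:ℝ)] with t ht using (hbound t ht).2
  -- the total sum limit
  have hsumu : Tendsto (fun t => ∑ i, τ t i / t) atTop (nhds (∑ i, φ i)) := by
    have hdetmu : ∀ t : ℝ, ∑ i, τ t i = Real.log (det g ^ 2) + t * ∑ i, φ i := by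
      intro t
      have h0 : ∏ j', ((0:ℝ) + Real.exp (τ t j'))
          = det g ^ 2 * det (Matrix.diagonal fun i => Real.exp (φ i * t)) := by
        rw [← hprod t 0, hdet2 0 t, zero_smul, zero_add]
      rw [Matrix.det_diagonal] at h0
      simp only [zero_add] at h0
      have h1 : ∏ j', Real.exp (τ t j') = Real.exp (∑ j', τ t j') := by
        rw [Real.exp_sum]
      have h2 : ∏ i, Real.exp (φ i * t) = Real.exp (t * ∑ i, φ i) := by
        rw [← Real.exp_sum]
        congr 1
        rw [← Finset.sum_mul, mul_comm]
      rw [h1, h2] at h0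
      have h3 : det g ^ 2 * Real.exp (t * ∑ i, φ i)
          = Real.exp (Real.log (det g ^ 2) + t * ∑ i, φ i) := by
        rw [Real.exp_add, Real.exp_log hdetg2]
      rw [h3] at h0
      exact Real.exp_eq_exp.mp h0
    have h1 : Tendsto (fun t : ℝ => Real.log (det g ^ 2) / t + ∑ i, φ i) atTop
        (nhds (0 + ∑ i, φ i)) :=
      (Tendsto.div_atTop tendsto_const_nhds tendsto_id).add tendsto_const_nhds
    rw [zero_add] at h1
    refine h1.congr' ?_
    filter_upwards [eventually_ge_atTop (1:ℝ)] with t ht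
    have ht0 : (0:ℝ) < t := lt_of_lt_of_le one_pos ht
    rw [← Finset.sum_div, hdetmu t, add_div, mul_comm t, mul_div_assoc, div_self ht0.ne',
      mul_one]
  -- antitonicity of the normalized exponents
  have hu : ∀ᶠ t in atTop, Antitone (fun i => τ t i / t) := by
    filter_upwards [eventually_ge_atTop (1:ℝ)] with t ht
    intro i k hik
    have ht0 : (0:ℝ) < t := lt_of_lt_of_le one_pos ht
    exact (div_le_div_iff_of_pos_right ht0).mpr (hτa t hik)
  exact recover φ hφ (fun t i => τ t i / t) hu hmaxu hsumu j
end

section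
/- For each positive definite symmetric matrix X and each real tuple φ_1 ≥ … ≥ φ_n, there exists exactly one geodesic of the form μ(t) = h·diag(e^{φ_1 t},…,e^{φ_n t})·hᵀ with h block lower triangular (blocks determined by equalities among φ_j) passing through X; i.e., through each point of E_n there passes a unique geodesic of a given finite pencil. -/
open Matrix

section Helpers

variable {n : ℕ}

private lemma conj_diag_apply (g : Matrix (Fin n) (Fin n) ℝ) (d : Fin n → ℝ) (i j : Fin n) :
    (g * Matrix.diagonal d * gᵀ) i j = ∑ m, g i m * d m * g j m := by
  rw [Matrix.mul_apply]
  apply Finset.sum_congr rfl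
  intro m _
  rw [Matrix.mul_diagonal, Matrix.transpose_apply]

private lemma conj_mul_assoc (P Q M : Matrix (Fin n) (Fin n) ℝ) :
    (P * Q) * M * (P * Q)ᵀ = P * (Q * M * Qᵀ) * Pᵀ := by
  rw [Matrix.transpose_mul]
  simp only [Matrix.mul_assoc]

/-- Conjugating a positive definite real matrix by an invertible matrix preserves
positive definiteness. -/
private lemma posDef_conj_real {A B : Matrix (Fin n) (Fin n) ℝ} (hA : A.PosDef)
    (hB : IsUnit B) : (B * A * Bᵀ).PosDef := by
  refine Matrix.posDef_iff_dotProduct_mulVec.mpr ⟨?_, fun x hx => ?_⟩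
  · show (B * A * Bᵀ)ᵀ = _
    have hAT : Aᵀ = A := by
      ext i j
      have := congrFun (congrFun hA.isHermitian.eq i) j
      simpa [Matrix.conjTranspose_apply] using this
    calc (B * A * Bᵀ)ᵀ = Bᵀᵀ * (Aᵀ * Bᵀ) := by
          conv_lhs => rw [Matrix.transpose_mul, Matrix.transpose_mul]
      _ = B * A * Bᵀ := by rw [Matrix.transpose_transpose, hAT, Matrix.mul_assoc]
  · have hBT : IsUnit Bᵀ := by
      rw [Matrix.isUnit_iff_isUnit_det, Matrix.det_transpose,
        ← Matrix.isUnit_iff_isUnit_det]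
      exact hB
    have hy : Bᵀ *ᵥ x ≠ 0 := by
      intro h0
      have hinj := Matrix.mulVec_injective_iff_isUnit.mpr hBT
      exact hx (hinj (by simpa using h0))
    have key : star x ⬝ᵥ (B * A * Bᵀ) *ᵥ x
        = star (Bᵀ *ᵥ x) ⬝ᵥ A *ᵥ (Bᵀ *ᵥ x) := by
      have h1 : (B * A * Bᵀ) *ᵥ x = B *ᵥ (A *ᵥ (Bᵀ *ᵥ x)) := by
        rw [Matrix.mulVec_mulVec, Matrix.mulVec_mulVec]
      rw [h1, Matrix.dotProduct_mulVec]
      have h2 : star x ᵥ* B = Bᵀ *ᵥ x := by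
        rw [show star x = x from rfl, ← Matrix.mulVec_transpose]
      rw [h2, show star (Bᵀ *ᵥ x) = Bᵀ *ᵥ x from rfl]
    rw [key]
    exact hA.dotProduct_mulVec_pos hy

/-- The key structural lemma: a block lower triangular matrix `g` conjugating one
exponential diagonal matrix into another is block *diagonal*. -/
private lemma block_diag_of_conj {φ : Fin n → ℝ} (hφ : Antitone φ)
    {g : Matrix (Fin n) (Fin n) ℝ} {t₁ t₂ : ℝ}
    (hg : ∀ i j, φ j < φ i → g i j = 0)
    (heq : g * Matrix.diagonal (fun m => Real.exp (φ m * t₁)) * gᵀ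
      = Matrix.diagonal (fun m => Real.exp (φ m * t₂))) :
    ∀ j i : Fin n, φ i < φ j → g i j = 0 := by
  have hentry : ∀ k l : Fin n,
      (∑ m, g k m * Real.exp (φ m * t₁) * g l m)
        = if k = l then Real.exp (φ k * t₂) else 0 := by
    intro k l
    have h0 : (g * Matrix.diagonal (fun m => Real.exp (φ m * t₁)) * gᵀ) k l
        = Matrix.diagonal (fun m => Real.exp (φ m * t₂)) k l := by rw [heq]
    rw [conj_diag_apply, Matrix.diagonal_apply] at h0
    exact h0
  have main : ∀ N : ℕ, ∀ j : Fin n, (j : ℕ) = N → ∀ i, φ i < φ j → g i j = 0 := by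
    intro N
    induction N using Nat.strong_induction_on with
    | _ N ih =>
      intro j hjN i hij
      -- entries in columns with strictly bigger φ-value vanish, by induction
      have IHcol : ∀ k m : Fin n, φ k < φ m → φ j < φ m → g k m = 0 := by
        intro k m hkm hjm
        have hmj : m < j := by
          by_contra hc
          push_neg at hc
          exact absurd (hφ hc) (not_le.mpr hjm)
        exact ih (m : ℕ) (hjN ▸ hmj) m rfl k hkm
      -- the block sums
      have Step : ∀ k l : Fin n, φ k = φ j →
          (∑ m, if φ m = φ j then g k m * g l m else 0)
            = if k = l then Real.exp (φ j * (t₂ - t₁)) else 0 := by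
        intro k l hk
        have he := hentry k l
        rw [hk] at he
        have hS : (∑ m, if φ m = φ j then g k m * g l m else 0) * Real.exp (φ j * t₁)
            = if k = l then Real.exp (φ j * t₂) else 0 := by
          rw [← he, Finset.sum_mul]
          apply Finset.sum_congr rfl
          intro m _
          by_cases hm : φ m = φ j
          · rw [if_pos hm, hm]; ring
          · rw [if_neg hm, zero_mul]
            rcases lt_or_gt_of_ne hm with hlt | hgt
            · rw [hg k m (by rw [hk]; exact hlt)]; ring
            · rw [IHcol k m (by rw [hk]; exact hgt) hgt]; ring
        by_cases hkl : k = l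
        · simp only [hkl, if_true] at hS ⊢
          have h2 : Real.exp (φ j * (t₂ - t₁)) * Real.exp (φ j * t₁)
              = Real.exp (φ j * t₂) := by rw [← Real.exp_add]; ring_nf
          exact mul_right_cancel₀ (Real.exp_ne_zero _) (hS.trans h2.symm)
        · simp only [hkl, if_false] at hS ⊢
          exact (mul_eq_zero.mp hS).resolve_right (Real.exp_ne_zero _)
      -- linear algebra step
      set G : Matrix (Fin n) (Fin n) ℝ :=
        Matrix.of (fun k m => if φ k = φ j ∧ φ m = φ j then g k m
          else if k = m then 1 else 0) with hG
      set u : Fin n → ℝ := fun m => if φ m = φ j then g i m else 0 with hu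
      set d : Fin n → ℝ := fun k => if φ k = φ j then Real.exp (φ j * (t₂ - t₁)) else 1
        with hd
      have hGapp : ∀ k m, G k m = if φ k = φ j ∧ φ m = φ j then g k m
          else if k = m then 1 else 0 := fun k m => rfl
      have hGGT : G * Gᵀ = Matrix.diagonal d := by
        ext k l
        rw [Matrix.mul_apply, Matrix.diagonal_apply]
        simp only [Matrix.transpose_apply]
        by_cases hk : φ k = φ j
        · by_cases hl : φ l = φ j
          · have hsum : (∑ m, G k m * G l m)
                = ∑ m, if φ m = φ j then g k m * g l m else 0 := by
              apply Finset.sum_congr rfl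
              intro m _
              rw [hGapp, hGapp]
              by_cases hm : φ m = φ j
              · rw [if_pos ⟨hk, hm⟩, if_pos ⟨hl, hm⟩, if_pos hm]
              · have hkm : k ≠ m := fun h => hm (show φ m = φ j by rw [← h]; exact hk)
                rw [if_neg (fun h => hm h.2), if_neg hkm, if_neg hm, zero_mul]
            rw [hsum, Step k l hk]
            by_cases hkl : k = l
            · rw [if_pos hkl, if_pos hkl]
              simp only [hd]
              rw [if_pos hk]
            · rw [if_neg hkl, if_neg hkl]
          · have : ∀ m, G k m * G l m = 0 := by
              intro m
              by_cases hm : φ m = φ j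
              · have h2 : G l m = 0 := by
                  rw [hGapp, if_neg (fun h => hl h.1),
                    if_neg (fun h => hl (show φ l = φ j by rw [h]; exact hm))]
                rw [h2, mul_zero]
              · have h1 : G k m = 0 := by
                  rw [hGapp, if_neg (fun h => hm h.2),
                    if_neg (fun h => hm (show φ m = φ j by rw [← h]; exact hk))]
                rw [h1, zero_mul]
            rw [Finset.sum_congr rfl (fun m _ => this m), Finset.sum_const_zero]
            have hkl : k ≠ l := fun h => hl (show φ l = φ j by rw [← h]; exact hk)
            rw [if_neg hkl]
        · have hrow : ∀ m, G k m = if k = m then 1 else 0 := by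
            intro m; rw [hGapp, if_neg (fun h => hk h.1)]
          by_cases hl : φ l = φ j
          · have : ∀ m, G k m * G l m = 0 := by
              intro m
              by_cases hm : φ m = φ j
              · have h1 : G k m = 0 := by
                  rw [hrow, if_neg (fun h => hk (show φ k = φ j by rw [h]; exact hm))]
                rw [h1, zero_mul]
              · have h2 : G l m = 0 := by
                  rw [hGapp, if_neg (fun h => hm h.2),
                    if_neg (fun h => hm (show φ m = φ j by rw [← h]; exact hl))]
                rw [h2, mul_zero]
            rw [Finset.sum_congr rfl (fun m _ => this m), Finset.sum_const_zero]
            have hkl : k ≠ l := fun h => hk (show φ k = φ j by rw [h]; exact hl)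
            rw [if_neg hkl]
          · have hrowl : ∀ m, G l m = if l = m then 1 else 0 := by
              intro m; rw [hGapp, if_neg (fun h => hl h.1)]
            have hterm : ∀ m, G k m * G l m
                = if k = m then (if l = m then (1:ℝ) else 0) else 0 := by
              intro m
              rw [hrow, hrowl, ite_mul, one_mul, zero_mul]
            rw [Finset.sum_congr rfl (fun m _ => hterm m),
              Finset.sum_ite_eq Finset.univ k (fun m => if l = m then (1:ℝ) else 0)]
            simp only [Finset.mem_univ, if_true]
            by_cases hkl : k = l
            · subst hkl
              rw [if_pos rfl, if_pos rfl]
              simp only [hd]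
              rw [if_neg hk]
            · rw [if_neg (fun h => hkl h.symm), if_neg hkl]
      have hdet : IsUnit G := by
        rw [Matrix.isUnit_iff_isUnit_det]
        have h1 : G.det * G.det = ∏ k, d k := by
          calc G.det * G.det = G.det * Gᵀ.det := by rw [Matrix.det_transpose]
            _ = (G * Gᵀ).det := (Matrix.det_mul _ _).symm
            _ = ∏ k, d k := by rw [hGGT, Matrix.det_diagonal]
        have h2 : (0:ℝ) < ∏ k, d k := by
          apply Finset.prod_pos
          intro k _
          simp only [hd]
          by_cases hk : φ k = φ j
          · rw [if_pos hk]; exact Real.exp_pos _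
          · rw [if_neg hk]; exact one_pos
        have : G.det ≠ 0 := by
          intro h
          rw [h, mul_zero] at h1
          exact h2.ne h1
        exact this.isUnit
      have hGu : G.mulVec u = 0 := by
        funext k
        simp only [Matrix.mulVec, dotProduct, Pi.zero_apply]
        by_cases hk : φ k = φ j
        · have hsum : (∑ m, G k m * u m)
              = ∑ m, if φ m = φ j then g k m * g i m else 0 := by
            apply Finset.sum_congr rfl
            intro m _
            rw [hGapp]
            simp only [hu]
            by_cases hm : φ m = φ j
            · rw [if_pos ⟨hk, hm⟩, if_pos hm, if_pos hm]
            · rw [if_neg hm, if_neg hm, mul_zero]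
          rw [hsum, Step k i hk]
          have hki : k ≠ i := by
            intro h
            rw [← h, hk] at hij
            exact hij.false
          rw [if_neg hki]
        · have : ∀ m, G k m * u m = 0 := by
            intro m
            rw [hGapp]
            simp only [hu]
            by_cases hm : φ m = φ j
            · have hkm : k ≠ m := fun h => hk (show φ k = φ j by rw [h]; exact hm)
              rw [if_neg (fun h => hk h.1), if_neg hkm, zero_mul]
            · rw [if_neg hm, mul_zero]
          rw [Finset.sum_congr rfl (fun m _ => this m), Finset.sum_const_zero]
      have hu0 : u = 0 := by
        have hdetG : IsUnit G.det := (Matrix.isUnit_iff_isUnit_det G).mp hdet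
        calc u = (1 : Matrix (Fin n) (Fin n) ℝ).mulVec u := (Matrix.one_mulVec u).symm
          _ = (G⁻¹ * G).mulVec u := by rw [Matrix.nonsing_inv_mul G hdetG]
          _ = G⁻¹.mulVec (G.mulVec u) := (Matrix.mulVec_mulVec _ _ _).symm
          _ = G⁻¹.mulVec 0 := by rw [hGu]
          _ = 0 := Matrix.mulVec_zero _
      have : u j = 0 := by rw [hu0]; rfl
      simp only [hu] at this
      simpa using this
  exact fun j i hij => main (j : ℕ) j rfl i hij

end Helpers

/-- Through each point `X` of the space of positive definite symmetric matrices there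
passes exactly one geodesic of the finite pencil of
`γ(t) = diag(e^{φ₁ t},…,e^{φₙ t})` (`φ₁ ≥ … ≥ φₙ`): there exist a block lower
triangular invertible `h` (blocks given by equal values of `φ`) and a time `t₀` with
`h D(t₀) hᵀ = X`, and any two such geodesics coincide as parametrized curves up to the
time shift matching the passage through `X`. -/
theorem unique_geodesic_of_finite_pencil_through_point (n : ℕ)
    (φ : Fin n → ℝ) (hφ : Antitone φ)
    (D : ℝ → Matrix (Fin n) (Fin n) ℝ)
    (hD : ∀ t, D t = Matrix.diagonal (fun i => Real.exp (φ i * t)))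
    (X : Matrix (Fin n) (Fin n) ℝ) (hX : X.PosDef) :
    (∃ (h : Matrix (Fin n) (Fin n) ℝ) (t₀ : ℝ),
      IsUnit h ∧ (∀ i j : Fin n, φ j < φ i → h i j = 0) ∧ h * D t₀ * hᵀ = X) ∧
    (∀ (h₁ h₂ : Matrix (Fin n) (Fin n) ℝ) (t₁ t₂ : ℝ),
      IsUnit h₁ → (∀ i j : Fin n, φ j < φ i → h₁ i j = 0) →
      IsUnit h₂ → (∀ i j : Fin n, φ j < φ i → h₂ i j = 0) →
      h₁ * D t₁ * h₁ᵀ = X → h₂ * D t₂ * h₂ᵀ = X →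
      ∀ t : ℝ, h₁ * D (t + t₁) * h₁ᵀ = h₂ * D (t + t₂) * h₂ᵀ) := by
  constructor
  · -- existence via LDL (Cholesky) decomposition
    haveI wInst : WellFoundedLT (Fin n) := inferInstance
    set A : Matrix (Fin n) (Fin n) ℝ := LDL.lowerInv hX with hA
    have hconjT : ∀ M : Matrix (Fin n) (Fin n) ℝ, Mᴴ = Mᵀ := by
      intro M; ext i j; simp [Matrix.conjTranspose_apply]
    -- `A` is invertible (transferring the fact across instance diamonds)
    have hAunit : IsUnit A := by
      obtain ⟨B, hB1, -⟩ := LDL.invertibleLowerInv hX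
      rw [← hA] at hB1
      refine (Matrix.isUnit_iff_isUnit_det A).mpr (Matrix.isUnit_det_of_left_inverse (B := B) ?_)
      rw [hB1]
    have hAdet : IsUnit A.det := (Matrix.isUnit_iff_isUnit_det A).mp hAunit
    haveI : Invertible A := A.invertibleOfIsUnitDet hAdet
    have hAtri : A.BlockTriangular (OrderDual.toDual : Fin n → (Fin n)ᵒᵈ) := by
      intro i j hij
      exact LDL.lowerInv_triangular hX (OrderDual.toDual_lt_toDual.mp hij)
    have hLTri : (A⁻¹).BlockTriangular (OrderDual.toDual : Fin n → (Fin n)ᵒᵈ) :=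
      Matrix.blockTriangular_inv_of_blockTriangular hAtri
    have hdiag : Matrix.diagonal (LDL.diagEntries hX) = A * X * Aᵀ := by
      have h0 := LDL.diag_eq_lowerInv_conj hX
      rw [← hA, hconjT] at h0
      rw [← h0]
      unfold LDL.diag
      congr!
    have hdiagPD : (Matrix.diagonal (LDL.diagEntries hX)).PosDef := by
      rw [hdiag]
      exact posDef_conj_real hX hAunit
    have hdpos : ∀ i, 0 < LDL.diagEntries hX i := Matrix.posDef_diagonal_iff.mp hdiagPD
    have hX' : A⁻¹ * Matrix.diagonal (LDL.diagEntries hX) * (A⁻¹)ᵀ = X := by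
      rw [hdiag, Matrix.transpose_nonsing_inv, Matrix.mul_assoc A X Aᵀ,
        Matrix.nonsing_inv_mul_cancel_left A (X * Aᵀ) hAdet]
      exact Matrix.mul_nonsing_inv_cancel_right Aᵀ X
        (show IsUnit (Aᵀ).det by rwa [Matrix.det_transpose])
    set s : Fin n → ℝ := fun i => Real.sqrt (LDL.diagEntries hX i) with hs
    refine ⟨A⁻¹ * Matrix.diagonal s, 0, ?_, ?_, ?_⟩
    · refine (Matrix.isUnit_nonsing_inv_iff.mpr hAunit).mul ?_
      rw [Matrix.isUnit_iff_isUnit_det, Matrix.det_diagonal]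
      exact (Finset.prod_ne_zero_iff.mpr fun i _ =>
        (Real.sqrt_pos.mpr (hdpos i)).ne').isUnit
    · intro i j hij
      have hij' : i < j := by
        by_contra hc
        push_neg at hc
        exact absurd (hφ hc) (not_le.mpr hij)
      rw [Matrix.mul_diagonal, hLTri (OrderDual.toDual_lt_toDual.mpr hij'), zero_mul]
    · have hD0 : D 0 = 1 := by
        rw [hD 0]
        simp
      rw [hD0, mul_one, Matrix.transpose_mul, Matrix.diagonal_transpose]
      calc A⁻¹ * Matrix.diagonal s * (Matrix.diagonal s * (A⁻¹)ᵀ)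
          = A⁻¹ * (Matrix.diagonal s * Matrix.diagonal s) * (A⁻¹)ᵀ := by
            rw [Matrix.mul_assoc, Matrix.mul_assoc, Matrix.mul_assoc]
        _ = A⁻¹ * Matrix.diagonal (LDL.diagEntries hX) * (A⁻¹)ᵀ := by
            rw [Matrix.diagonal_mul_diagonal]
            have hss : (fun i => s i * s i) = LDL.diagEntries hX := by
              funext i
              simp only [hs]
              exact Real.mul_self_sqrt (hdpos i).le
            rw [hss]
        _ = X := hX'
  · -- uniqueness
    intro h₁ h₂ t₁ t₂ hu₁ hg₁ hu₂ hg₂ hX₁ hX₂ t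
    have hu₂det : IsUnit h₂.det := (Matrix.isUnit_iff_isUnit_det h₂).mp hu₂
    haveI : Invertible h₂ := h₂.invertibleOfIsUnitDet hu₂det
    set g : Matrix (Fin n) (Fin n) ℝ := h₂⁻¹ * h₁ with hgdef
    have hgTri : g.BlockTriangular φ :=
      Matrix.BlockTriangular.mul
        (Matrix.blockTriangular_inv_of_blockTriangular (fun i j h => hg₂ i j h))
        (fun i j h => hg₁ i j h)
    have hcomb : h₂ * g = h₁ := Matrix.mul_nonsing_inv_cancel_left h₂ h₁ hu₂det
    -- g conjugates D t₁ to D t₂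
    have hgD : g * D t₁ * gᵀ = D t₂ := by
      have e1 : h₂ * (g * D t₁ * gᵀ) * h₂ᵀ = h₂ * D t₂ * h₂ᵀ := by
        calc h₂ * (g * D t₁ * gᵀ) * h₂ᵀ
            = (h₂ * g) * D t₁ * (h₂ * g)ᵀ := (conj_mul_assoc h₂ g (D t₁)).symm
          _ = h₁ * D t₁ * h₁ᵀ := by rw [hcomb]
          _ = h₂ * D t₂ * h₂ᵀ := by rw [hX₁, hX₂]
      have hu₂Tdet : IsUnit h₂ᵀ.det := by rwa [Matrix.det_transpose]
      have e2 : h₂ * (g * D t₁ * gᵀ) = h₂ * D t₂ := by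
        have := congrArg (fun M => M * (h₂ᵀ)⁻¹) e1
        simpa only [Matrix.mul_nonsing_inv_cancel_right _ _ hu₂Tdet] using this
      have := congrArg (fun M => h₂⁻¹ * M) e2
      simpa only [Matrix.nonsing_inv_mul_cancel_left _ _ hu₂det] using this
    -- entrywise version
    have hgD' : g * Matrix.diagonal (fun m => Real.exp (φ m * t₁)) * gᵀ
        = Matrix.diagonal (fun m => Real.exp (φ m * t₂)) := by
      rw [← hD t₁, ← hD t₂]; exact hgD
    have hblock := block_diag_of_conj hφ (fun i j h => hgTri h) hgD'
    have hdiagonly : ∀ i m : Fin n, φ m ≠ φ i → g i m = 0 := by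
      intro i m h
      rcases h.lt_or_gt with h' | h'
      · exact hgTri h'
      · exact hblock m i h'
    -- the exponential factoring
    have hexp : ∀ (u : ℝ) (i l : Fin n),
        (g * Matrix.diagonal (fun m => Real.exp (φ m * u)) * gᵀ) i l
          = Real.exp (φ i * u) * ∑ m, g i m * g l m := by
      intro u i l
      rw [conj_diag_apply, Finset.mul_sum]
      apply Finset.sum_congr rfl
      intro m _
      by_cases hm : φ m = φ i
      · rw [hm]; ring
      · rw [hdiagonly i m hm]; ring
    have hSil : ∀ i l : Fin n, (∑ m, g i m * g l m)
        = if i = l then Real.exp (φ i * (t₂ - t₁)) else 0 := by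
      intro i l
      have h0 : Real.exp (φ i * t₁) * (∑ m, g i m * g l m)
          = if i = l then Real.exp (φ i * t₂) else 0 := by
        rw [← hexp t₁ i l, hgD', Matrix.diagonal_apply]
      by_cases hil : i = l
      · simp only [hil, if_true] at h0 ⊢
        have h2 : Real.exp (φ l * t₁) * Real.exp (φ l * (t₂ - t₁))
            = Real.exp (φ l * t₂) := by rw [← Real.exp_add]; ring_nf
        exact mul_left_cancel₀ (Real.exp_ne_zero _) (h0.trans h2.symm)
      · simp only [hil, if_false] at h0 ⊢
        exact (mul_eq_zero.mp h0).resolve_left (Real.exp_ne_zero _)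
    -- conclude g * D (t + t₁) * gᵀ = D (t + t₂)
    have hgDt : g * D (t + t₁) * gᵀ = D (t + t₂) := by
      rw [hD (t + t₁), hD (t + t₂)]
      ext i l
      rw [hexp (t + t₁) i l, hSil i l, Matrix.diagonal_apply]
      by_cases hil : i = l
      · rw [if_pos hil, if_pos hil, ← Real.exp_add]
        ring_nf
      · rw [if_neg hil, if_neg hil, mul_zero]
    calc h₁ * D (t + t₁) * h₁ᵀ
        = (h₂ * g) * D (t + t₁) * (h₂ * g)ᵀ := by rw [hcomb]
      _ = h₂ * (g * D (t + t₁) * gᵀ) * h₂ᵀ := conj_mul_assoc h₂ g (D (t + t₁))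
      _ = h₂ * D (t + t₂) * h₂ᵀ := by rw [hgDt]
end

section
/- Let X(z) be a matrix-valued function on an interval (0,ε) each of whose entries is given by a convergent Laurent series z^{-k}(a_0 + a_1 z + …), and suppose X(z) is symmetric positive definite for all z ∈ (0,ε). Then there exist integers k_1 ≥ k_2 ≥ … ≥ k_n and a matrix-valued function g(z), analytic in a neighborhood of 0 with g(0) invertible, such that X(z) = g(z)·diag(z^{-k_1},…,z^{-k_n})·g(z)ᵀ. -/
open Matrix Filter Set Topology

def MVal (m : ℤ) (f : ℝ → ℝ) : Prop :=
  ∃ h : ℝ → ℝ, AnalyticAt ℝ h 0 ∧ ∀ᶠ z in 𝓝[>] (0:ℝ), f z = h z * z ^ m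

lemma analyticAt_pow_mul {h : ℝ → ℝ} (hh : AnalyticAt ℝ h 0) (k : ℕ) :
    AnalyticAt ℝ (fun z => z ^ k * h z) 0 := ((analyticAt_id.pow k).mul hh)

lemma tendsto_zpow_mul {j : ℤ} (hj : 0 < j) {h : ℝ → ℝ} (hh : ContinuousAt h 0) :
    Tendsto (fun z : ℝ => z ^ j * h z) (𝓝[>] (0:ℝ)) (𝓝 0) := by
  have h1 : Tendsto (fun z : ℝ => z ^ j.toNat * h z) (𝓝 (0:ℝ)) (𝓝 0) := by
    have h0 : ContinuousAt (fun z : ℝ => z ^ j.toNat * h z) 0 :=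
      ((continuous_pow j.toNat).continuousAt (x := (0:ℝ))).mul hh
    have h0' : Tendsto (fun z : ℝ => z ^ j.toNat * h z) (𝓝 0)
        (𝓝 ((0:ℝ) ^ j.toNat * h 0)) := h0
    simpa [zero_pow (by omega : j.toNat ≠ 0)] using h0'
  have h2 := h1.mono_left (nhdsWithin_le_nhds : 𝓝[>] (0:ℝ) ≤ 𝓝 0)
  apply h2.congr'
  filter_upwards [self_mem_nhdsWithin] with z hz
  rw [← zpow_natCast, Int.toNat_of_nonneg hj.le]

lemma MVal.mono {m m' : ℤ} {f : ℝ → ℝ} (hle : m' ≤ m) (hf : MVal m f) : MVal m' f := by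
  obtain ⟨h, hh, he⟩ := hf
  refine ⟨fun z => z ^ (m - m').toNat * h z, analyticAt_pow_mul hh _, ?_⟩
  filter_upwards [he, self_mem_nhdsWithin] with z hz hz'
  have hz0 : (0:ℝ) < z := hz'
  have hsplit : z ^ m = z ^ (m - m') * z ^ m' := by
    rw [← zpow_add₀ hz0.ne']; norm_num
  rw [hz, ← zpow_natCast (z) ((m - m').toNat), Int.toNat_of_nonneg (by omega), hsplit]
  ring

lemma mval_le_exact {m ν : ℤ} {f u : ℝ → ℝ} (hf : MVal m f) (hu : ContinuousAt u 0)
    (hu0 : u 0 ≠ 0) (heq : ∀ᶠ z in 𝓝[>] (0:ℝ), f z = u z * z ^ ν) : m ≤ ν := by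
  by_contra hlt
  push_neg at hlt
  obtain ⟨h, hh, he⟩ := hf
  have hev : ∀ᶠ z in 𝓝[>] (0:ℝ), u z = z ^ (m - ν) * h z := by
    filter_upwards [he, heq, self_mem_nhdsWithin] with z h1 h2 (hz : (0:ℝ) < z)
    have h3 : u z * z ^ ν = z ^ m * h z := by rw [← h2, h1]; ring
    have hν : (z:ℝ) ^ ν ≠ 0 := (zpow_pos hz ν).ne'
    rw [zpow_sub₀ hz.ne', div_mul_eq_mul_div, eq_div_iff hν]
    linarith [h3]
  have ht1 : Tendsto u (𝓝[>] (0:ℝ)) (𝓝 (u 0)) :=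
    (hu.tendsto).mono_left nhdsWithin_le_nhds
  have ht2 : Tendsto u (𝓝[>] (0:ℝ)) (𝓝 0) :=
    (tendsto_zpow_mul (j := m - ν) (by omega) hh.continuousAt).congr'
      (by filter_upwards [hev] with z hz using hz.symm)
  exact hu0 (tendsto_nhds_unique ht1 ht2)

lemma exists_exact_val {m : ℤ} {f : ℝ → ℝ} (hf : MVal m f)
    (hpos : ∀ᶠ z in 𝓝[>] (0:ℝ), 0 < f z) :
    ∃ (ν : ℤ) (u : ℝ → ℝ), AnalyticAt ℝ u 0 ∧ 0 < u 0 ∧ m ≤ ν ∧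
      ∀ᶠ z in 𝓝[>] (0:ℝ), f z = u z * z ^ ν := by
  obtain ⟨h, hh, he⟩ := hf
  have hnz : ¬ (∀ᶠ z in 𝓝 (0:ℝ), h z = 0) := by
    intro hcon
    have : ∀ᶠ z in 𝓝[>] (0:ℝ), (0:ℝ) < 0 := by
      filter_upwards [he, hpos, nhdsWithin_le_nhds hcon] with z h1 h2 h3
      rw [h1, h3, zero_mul] at h2; exact h2
    exact absurd this.exists (by simp)
  have hord : analyticOrderAt h 0 ≠ ⊤ := fun hc => hnz (analyticOrderAt_eq_top.mp hc)
  obtain ⟨N, hN⟩ := WithTop.ne_top_iff_exists.mp hord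
  obtain ⟨w, hw, hw0, hwe⟩ := (hh.analyticOrderAt_eq_natCast (n := N)).mp hN.symm
  have hfe : ∀ᶠ z in 𝓝[>] (0:ℝ), f z = w z * z ^ ((N : ℤ) + m) := by
    filter_upwards [he, nhdsWithin_le_nhds hwe, self_mem_nhdsWithin]
      with z h1 h2 (hz : (0:ℝ) < z)
    rw [h1, h2]
    simp only [sub_zero, smul_eq_mul]
    rw [zpow_add₀ hz.ne', zpow_natCast]
    ring
  have hwpos : ∀ᶠ z in 𝓝[>] (0:ℝ), 0 < w z := by
    filter_upwards [hfe, hpos, self_mem_nhdsWithin] with z h1 h2 (hz : (0:ℝ) < z)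
    nlinarith [zpow_pos hz ((N:ℤ) + m), h1 ▸ h2]
  have hw0' : 0 ≤ w 0 := by
    have ht : Tendsto w (𝓝[>] (0:ℝ)) (𝓝 (w 0)) :=
      hw.continuousAt.tendsto.mono_left nhdsWithin_le_nhds
    exact ge_of_tendsto ht (hwpos.mono fun z hz => hz.le)
  exact ⟨(N : ℤ) + m, w, hw, lt_of_le_of_ne hw0' (Ne.symm hw0), by omega, hfe⟩

/-- Cauchy–Schwarz style valuation bound for an entry dominated by two diagonal entries. -/
lemma mval_of_sq_le {m ν₁ ν₂ ν : ℤ} {f u₁ u₂ : ℝ → ℝ} {d₁ d₂ : ℝ → ℝ}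
    (hf : MVal m f)
    (h₁ : AnalyticAt ℝ u₁ 0) (h₁0 : u₁ 0 ≠ 0)
    (e₁ : ∀ᶠ z in 𝓝[>] (0:ℝ), d₁ z = u₁ z * z ^ ν₁)
    (h₂ : AnalyticAt ℝ u₂ 0) (h₂0 : u₂ 0 ≠ 0)
    (e₂ : ∀ᶠ z in 𝓝[>] (0:ℝ), d₂ z = u₂ z * z ^ ν₂)
    (hineq : ∀ᶠ z in 𝓝[>] (0:ℝ), f z ^ 2 ≤ d₁ z * d₂ z)
    (hν : 2 * ν ≤ ν₁ + ν₂) : MVal ν f := by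
  obtain ⟨h, hh, he⟩ := hf
  by_cases hz : ∀ᶠ z in 𝓝 (0:ℝ), h z = 0
  · refine ⟨fun _ => 0, analyticAt_const, ?_⟩
    filter_upwards [he, nhdsWithin_le_nhds hz] with z hz1 hz2
    rw [hz1, hz2]; ring
  · have hord : analyticOrderAt h 0 ≠ ⊤ := fun hc => hz (analyticOrderAt_eq_top.mp hc)
    obtain ⟨N, hN⟩ := WithTop.ne_top_iff_exists.mp hord
    obtain ⟨w, hw, hw0, hwe⟩ := (hh.analyticOrderAt_eq_natCast (n := N)).mp hN.symm
    set μ : ℤ := (N : ℤ) + m with hμ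
    have hfe : ∀ᶠ z in 𝓝[>] (0:ℝ), f z = w z * z ^ μ := by
      filter_upwards [he, nhdsWithin_le_nhds hwe, self_mem_nhdsWithin]
        with z hz1 hz2 (hzp : (0:ℝ) < z)
      rw [hz1, hz2]
      simp only [sub_zero, smul_eq_mul]
      rw [zpow_add₀ hzp.ne', zpow_natCast]
      ring
    have key : ν₁ + ν₂ ≤ 2 * μ := by
      by_contra hcon
      push_neg at hcon
      have hsq : ∀ᶠ z in 𝓝[>] (0:ℝ),
          w z ^ 2 ≤ z ^ (ν₁ + ν₂ - 2 * μ) * (u₁ z * u₂ z) := by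
        filter_upwards [hfe, e₁, e₂, hineq, self_mem_nhdsWithin]
          with z hz1 hz2 hz3 hz4 (hzp : (0:ℝ) < z)
        rw [hz1, hz2, hz3] at hz4
        have hzm : (0:ℝ) < z ^ (2 * μ) := zpow_pos hzp _
        have hsplit2 : z ^ (2 * μ) = z ^ μ * z ^ μ := by
          rw [← zpow_add₀ hzp.ne']; congr 1; ring
        have expand : (w z * z ^ μ) ^ 2 = w z ^ 2 * z ^ (2 * μ) := by
          rw [hsplit2]; ring
        rw [expand] at hz4
        have h6 : z ^ ν₁ * z ^ ν₂ = z ^ (ν₁ + ν₂ - 2*μ) * z ^ (2*μ) := by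
          rw [← zpow_add₀ hzp.ne', ← zpow_add₀ hzp.ne']; congr 1; ring
        have h5 : u₁ z * z ^ ν₁ * (u₂ z * z ^ ν₂)
            = z ^ (ν₁ + ν₂ - 2*μ) * (u₁ z * u₂ z) * z ^ (2*μ) := by
          rw [show u₁ z * z ^ ν₁ * (u₂ z * z ^ ν₂)
            = (z ^ ν₁ * z ^ ν₂) * (u₁ z * u₂ z) from by ring, h6]; ring
        rw [h5] at hz4
        exact le_of_mul_le_mul_right hz4 hzm
      have ht1 : Tendsto (fun z => w z ^ 2) (𝓝[>] (0:ℝ)) (𝓝 (w 0 ^ 2)) :=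
        ((hw.continuousAt.pow 2).tendsto).mono_left nhdsWithin_le_nhds
      have ht2 : Tendsto (fun z => z ^ (ν₁ + ν₂ - 2 * μ) * (u₁ z * u₂ z)) (𝓝[>] (0:ℝ)) (𝓝 0) :=
        tendsto_zpow_mul (by omega) (h₁.continuousAt.mul h₂.continuousAt)
      have hle : w 0 ^ 2 ≤ 0 := le_of_tendsto_of_tendsto ht1 ht2 hsq
      have hpos2 : 0 < w 0 ^ 2 := lt_of_le_of_ne (sq_nonneg _) (Ne.symm (pow_ne_zero 2 hw0))
      exact absurd hle (not_le.mpr hpos2)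
    have : MVal μ f := ⟨w, hw, hfe⟩
    exact this.mono (by omega)

section MatrixHelpers
variable {N : ℕ}

lemma posdef_diag_pos {M : Matrix (Fin N) (Fin N) ℝ} (hM : M.PosDef) (i : Fin N) :
    0 < M i i := by
  have := hM.dotProduct_mulVec_pos (x := Pi.single i 1) (by simp [Pi.single_eq_same, Function.ne_iff])
  simpa [dotProduct, mulVec, Pi.single_apply, Finset.sum_ite_eq] using this

lemma posdef_entry_sq_le {M : Matrix (Fin N) (Fin N) ℝ} (hM : M.PosDef) (i j : Fin N) :
    M i j ^ 2 ≤ M i i * M j j := by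
  rcases eq_or_ne i j with rfl | hij
  · nlinarith [posdef_diag_pos hM i]
  · have hsym : M j i = M i j := by
      have := hM.isHermitian
      have h2 : Mᴴ j i = M j i := by rw [this]
      simpa [Matrix.conjTranspose_apply] using h2.symm
    have key : ∀ t : ℝ, 0 ≤ M i i * (t * t) + (2 * M i j) * t + M j j := by
      intro t
      have hv : (fun l => t * ((Pi.single i (1:ℝ) : Fin N → ℝ) l) + (Pi.single j (1:ℝ) : Fin N → ℝ) l) ≠ 0 := by
        intro hcon
        have := congrFun hcon j
        simp [Pi.single_apply, hij, Ne.symm hij] at this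
      have := hM.dotProduct_mulVec_pos hv
      have hq : (fun l => t * ((Pi.single i (1:ℝ) : Fin N → ℝ) l) + (Pi.single j (1:ℝ) : Fin N → ℝ) l) ⬝ᵥ
          (M *ᵥ fun l => t * ((Pi.single i (1:ℝ) : Fin N → ℝ) l) + (Pi.single j (1:ℝ) : Fin N → ℝ) l)
          = M i i * (t * t) + (2 * M i j) * t + M j j := by
        simp only [dotProduct, mulVec, Pi.single_apply, mul_ite, mul_one, mul_zero,
          Finset.sum_add_distrib, Finset.mul_sum, mul_add, add_mul, ite_mul, zero_mul,
          Finset.sum_ite_eq', Finset.mem_univ, if_true]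
        rw [hsym]; ring
      simp only [star_trivial] at this
      rw [hq] at this
      exact this.le
    have := discrim_le_zero key
    simp only [discrim] at this
    nlinarith

lemma posdef_conj {M B B' : Matrix (Fin N) (Fin N) ℝ} (hM : M.PosDef)
    (hB : B * B' = 1) (hB' : B' * B = 1) : (B * M * Bᵀ).PosDef := by
  refine Matrix.PosDef.of_dotProduct_mulVec_pos ?_ ?_
  · have hherm : Mᴴ = M := hM.isHermitian
    show (B * M * Bᵀ)ᴴ = B * M * Bᵀ
    rw [Matrix.conjTranspose_mul, Matrix.conjTranspose_mul, hherm]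
    rw [Matrix.conjTranspose_eq_transpose_of_trivial, Matrix.conjTranspose_eq_transpose_of_trivial,
      Matrix.transpose_transpose, Matrix.mul_assoc]
  · intro x hx
    have hy : Bᵀ *ᵥ x ≠ 0 := by
      intro hcon
      apply hx
      have h1 : B'ᵀ *ᵥ (Bᵀ *ᵥ x) = x := by
        rw [Matrix.mulVec_mulVec, ← Matrix.transpose_mul, hB, Matrix.transpose_one,
          Matrix.one_mulVec]
      rw [← h1, hcon, Matrix.mulVec_zero]
    have := hM.dotProduct_mulVec_pos hy
    have hrw : star x ⬝ᵥ ((B * M * Bᵀ) *ᵥ x)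
        = star (Bᵀ *ᵥ x) ⬝ᵥ (M *ᵥ (Bᵀ *ᵥ x)) := by
      have h1 : x ᵥ* B = Bᵀ *ᵥ x := by
        rw [← Matrix.transpose_transpose B, Matrix.vecMul_transpose, Matrix.transpose_transpose]
      simp only [star_trivial]
      rw [← Matrix.mulVec_mulVec, ← Matrix.mulVec_mulVec, Matrix.dotProduct_mulVec, h1]
    rw [hrw]
    exact this

lemma posdef_submatrix {m : ℕ} {M : Matrix (Fin N) (Fin N) ℝ} (hM : M.PosDef)
    (f : Fin m → Fin N) (hf : Function.Injective f) : (M.submatrix f f).PosDef := by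
  refine Matrix.PosDef.of_dotProduct_mulVec_pos ?_ ?_
  · show (M.submatrix f f)ᴴ = M.submatrix f f
    ext i j
    have hherm : Mᴴ = M := hM.isHermitian
    have := congrFun (congrFun hherm (f i)) (f j)
    simpa [Matrix.conjTranspose_apply] using this
  · intro x hx
    set y : Fin N → ℝ := fun jj => ∑ i, if jj = f i then x i else 0 with hy
    have hyf : ∀ i, y (f i) = x i := by
      intro i
      simp only [hy, hf.eq_iff, Finset.sum_ite_eq, Finset.sum_ite_eq', Finset.mem_univ, if_true]
    have hynz : y ≠ 0 := by
      intro hcon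
      apply hx
      funext i
      have := congrFun hcon (f i)
      rw [hyf i] at this
      exact this
    have := hM.dotProduct_mulVec_pos hynz
    have hMy : ∀ jj, (M *ᵥ y) jj = ∑ i, M jj (f i) * x i := by
      intro jj
      simp only [mulVec, dotProduct, hy, Finset.mul_sum, mul_ite, mul_zero]
      rw [Finset.sum_comm]
      simp [Finset.sum_ite_eq', Finset.mem_univ]
    have hrw : star y ⬝ᵥ (M *ᵥ y) = star x ⬝ᵥ ((M.submatrix f f) *ᵥ x) := by
      simp only [star_trivial, dotProduct]
      calc (∑ jj, y jj * (M *ᵥ y) jj)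
          = ∑ jj, (∑ i, if jj = f i then x i else 0) * (∑ i, M jj (f i) * x i) := by
            apply Finset.sum_congr rfl; intro jj _; rw [hMy jj]
        _ = ∑ i, x i * ((M.submatrix f f) *ᵥ x) i := by
            simp only [Finset.sum_mul, ite_mul, zero_mul]
            rw [Finset.sum_comm]
            simp [Finset.sum_ite_eq', Finset.mem_univ, mulVec, dotProduct,
              Matrix.submatrix_apply]
    rw [← hrw]
    exact this

end MatrixHelpers

section Emat
variable {N : ℕ}

def Ematrix (c : Fin (N+1) → ℝ) : Matrix (Fin (N+1)) (Fin (N+1)) ℝ :=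
  Matrix.of fun i j => (if i = j then 1 else 0) + c i * (if j = 0 then 1 else 0)

lemma Ematrix_mul_apply (c : Fin (N+1) → ℝ) (M : Matrix (Fin (N+1)) (Fin (N+1)) ℝ) (i j) :
    (Ematrix c * M) i j = M i j + c i * M 0 j := by
  rw [Matrix.mul_apply]
  simp only [Ematrix, Matrix.of_apply, add_mul, ite_mul, one_mul, zero_mul, mul_assoc]
  rw [Finset.sum_add_distrib, Finset.sum_ite_eq, ← Finset.mul_sum, Finset.sum_ite_eq']
  simp

lemma mul_EmatrixT_apply (c : Fin (N+1) → ℝ) (M : Matrix (Fin (N+1)) (Fin (N+1)) ℝ) (i j) :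
    (M * (Ematrix c)ᵀ) i j = M i j + M i 0 * c j := by
  rw [Matrix.mul_apply]
  simp only [Ematrix, Matrix.transpose_apply, Matrix.of_apply, mul_add, mul_ite, mul_one,
    mul_zero, ite_mul, zero_mul]
  rw [Finset.sum_add_distrib, Finset.sum_ite_eq]
  simp

lemma Ematrix_inv (c : Fin (N+1) → ℝ) (hc0 : c 0 = 0) :
    Ematrix c * Ematrix (fun i => -(c i)) = 1 ∧ Ematrix (fun i => -(c i)) * Ematrix c = 1 := by
  have key : ∀ d e : Fin (N+1) → ℝ, e 0 = 0 → (∀ i, d i + e i = 0) →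
      Ematrix d * Ematrix e = 1 := by
    intro d e he hde
    ext i j
    rw [Ematrix_mul_apply]
    simp only [Ematrix, Matrix.of_apply, Matrix.one_apply, he]
    by_cases hj : j = 0
    · subst hj
      by_cases hi : i = 0
      · subst hi; simp [he]
        linarith [hde 0]
      · simp only [hi, if_false, if_pos rfl, eq_comm (a := i) (b := (0:Fin (N+1))), hi]
        have := hde i
        simp [hi]
        linarith
    · simp [hj, Ne.symm hj, fun h : (0:Fin (N+1)) = j => hj h.symm]
  exact ⟨key c _ (by simp [hc0]) (fun i => by ring),
    key _ c hc0 (fun i => by ring)⟩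

lemma antitone_fin_cases (k : ℤ) (κ' : Fin N → ℤ) (h1 : Antitone κ') (h2 : ∀ p, κ' p ≤ k) :
    Antitone (Fin.cases k κ' : Fin (N+1) → ℤ) := by
  intro a b hab
  induction b using Fin.cases with
  | zero =>
    have : a = 0 := le_antisymm hab (Fin.zero_le a)
    simp [this]
  | succ q =>
    induction a using Fin.cases with
    | zero => simpa using h2 q
    | succ p =>
      have hpq : p ≤ q := by rwa [Fin.succ_le_succ_iff] at hab
      simpa using h1 hpq

end Emat

lemma my_analyticAt_sqrt {x : ℝ} (hx : 0 < x) : AnalyticAt ℝ Real.sqrt x := by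
  have hG' : AnalyticAt ℝ (fun w => Complex.exp ((1/2) * Complex.log w)) (x : ℂ) :=
    (analyticAt_cexp.comp ((analyticAt_const.mul
      (analyticAt_clog (Complex.ofReal_mem_slitPlane.2 hx))))).restrictScalars
  have hcomp : AnalyticAt ℝ
      (fun t : ℝ => (Complex.exp ((1/2) * Complex.log (t : ℂ))).re) x := by
    have h2 : AnalyticAt ℝ ((Complex.reCLM : ℂ → ℝ) ∘
        ((fun w => Complex.exp ((1/2) * Complex.log w)) ∘ (Complex.ofRealCLM : ℝ → ℂ))) x :=
      AnalyticAt.comp (Complex.reCLM.analyticAt _)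
        (AnalyticAt.comp hG' (Complex.ofRealCLM.analyticAt x))
    exact h2
  apply hcomp.congr
  have hev : ∀ᶠ t : ℝ in 𝓝 x, 0 < t := eventually_gt_nhds hx
  filter_upwards [hev] with t ht
  rw [← Complex.ofReal_log ht.le]
  have : (1/2 : ℂ) * (Real.log t : ℂ) = ((Real.log t * (1/2) : ℝ) : ℂ) := by push_cast; ring
  rw [this, ← Complex.ofReal_exp, Complex.ofReal_re,
    Real.sqrt_eq_rpow, Real.rpow_def_of_pos ht]

set_option maxHeartbeats 1000000 in
lemma core : ∀ (n : ℕ) (K : ℤ) (X : ℝ → Matrix (Fin n) (Fin n) ℝ),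
    (∀ᶠ z in 𝓝[>] (0:ℝ), (X z).PosDef) →
    (∀ i j, MVal (-K) (fun z => X z i j)) →
    ∃ κ : Fin n → ℤ, Antitone κ ∧ (∀ i, κ i ≤ K) ∧
      ∃ g : ℝ → Matrix (Fin n) (Fin n) ℝ,
        (∀ i j, AnalyticAt ℝ (fun z => g z i j) 0) ∧ IsUnit (g 0) ∧
        ∀ᶠ z in 𝓝[>] (0:ℝ), X z = g z * Matrix.diagonal (fun i => z ^ (-(κ i))) * (g z)ᵀ := by
  intro n
  induction n with
  | zero =>
    intro K X hpos hmer
    refine ⟨fun i => i.elim0, fun i => i.elim0, fun i => i.elim0,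
      fun _ => 1, fun i => i.elim0, isUnit_one, ?_⟩
    filter_upwards with z
    ext i j
    exact i.elim0
  | succ n ih =>
    intro K X hpos hmer
    -- diagonal valuations
    have hdiag : ∀ i, ∃ (νi : ℤ) (ui : ℝ → ℝ), AnalyticAt ℝ ui 0 ∧ 0 < ui 0 ∧ -K ≤ νi ∧
        ∀ᶠ z in 𝓝[>] (0:ℝ), X z i i = ui z * z ^ νi :=
      fun i => exists_exact_val (hmer i i) (hpos.mono fun z hz => posdef_diag_pos hz i)
    choose ν u hu hu0 hνb hue using hdiag
    obtain ⟨i0, -, hmin⟩ := Finset.exists_min_image Finset.univ ν ⟨0, Finset.mem_univ 0⟩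
    set σ : Equiv.Perm (Fin (n+1)) := Equiv.swap 0 i0 with hσ
    set Y : ℝ → Matrix (Fin (n+1)) (Fin (n+1)) ℝ := fun z => (X z).submatrix σ σ with hY
    have hYpos : ∀ᶠ z in 𝓝[>] (0:ℝ), (Y z).PosDef :=
      hpos.mono fun z hz => posdef_submatrix hz σ σ.injective
    have hσ0 : σ 0 = i0 := Equiv.swap_apply_left 0 i0
    -- all entries of Y have valuation ≥ ν i0
    have hYval : ∀ i j, ∃ h, AnalyticAt ℝ h 0 ∧
        ∀ᶠ z in 𝓝[>] (0:ℝ), Y z i j = h z * z ^ (ν i0) := by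
      intro i j
      have : MVal (ν i0) (fun z => Y z i j) := by
        refine mval_of_sq_le (hmer (σ i) (σ j)) (hu (σ i)) (hu0 (σ i)).ne' (hue (σ i))
          (hu (σ j)) (hu0 (σ j)).ne' (hue (σ j)) ?_ ?_
        · exact hYpos.mono fun z hz => by
            have := posdef_entry_sq_le hz i j
            simpa [hY, Matrix.submatrix_apply] using this
        · have h1 := hmin (σ i) (Finset.mem_univ _)
          have h2 := hmin (σ j) (Finset.mem_univ _)
          omega
      exact this
    choose H hH hHe using hYval
    set U : ℝ → ℝ := H 0 0 with hUdef
    have hUev : ∀ᶠ z in 𝓝[>] (0:ℝ), U z = u i0 z := by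
      filter_upwards [hHe 0 0, hue i0, self_mem_nhdsWithin] with z h1 h2 (hz : (0:ℝ) < z)
      have hYX : Y z 0 0 = X z i0 i0 := by simp [hY, Matrix.submatrix_apply, hσ0]
      have : U z * z ^ (ν i0) = u i0 z * z ^ (ν i0) := by rw [← h1, hYX, h2]
      exact mul_right_cancel₀ (zpow_pos hz _).ne' this
    have hU0pos : 0 < U 0 := by
      have ht1 : Tendsto U (𝓝[>] (0:ℝ)) (𝓝 (U 0)) :=
        (hH 0 0).continuousAt.tendsto.mono_left nhdsWithin_le_nhds
      have ht2 : Tendsto U (𝓝[>] (0:ℝ)) (𝓝 (u i0 0)) :=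
        ((hu i0).continuousAt.tendsto.mono_left nhdsWithin_le_nhds).congr'
          (hUev.mono fun z h => h.symm)
      rw [tendsto_nhds_unique ht1 ht2]
      exact hu0 i0
    have hUevpos : ∀ᶠ z in 𝓝[>] (0:ℝ), 0 < U z := by
      exact nhdsWithin_le_nhds ((hH 0 0).continuousAt.eventually (eventually_gt_nhds hU0pos))
    -- the elimination coefficients
    set c : Fin (n+1) → ℝ → ℝ :=
      fun i => if i = 0 then (fun _ => 0) else fun z => H i 0 z / U z with hcdef
    have hca : ∀ i, AnalyticAt ℝ (c i) 0 := by
      intro i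
      by_cases hi : i = 0
      · simp only [hcdef, hi, if_pos rfl]; exact analyticAt_const
      · simp only [hcdef, if_neg hi]
        exact (hH i 0).div (hH 0 0) hU0pos.ne'
    have hc0 : ∀ z, c 0 z = 0 := by simp [hcdef]
    have hcs : ∀ (p : Fin n) z, c p.succ z = H p.succ 0 z / U z := by
      intro p z; simp [hcdef, Fin.succ_ne_zero]
    -- Schur complement
    set Sf : ℝ → Matrix (Fin n) (Fin n) ℝ := fun z => Matrix.of fun p q =>
      (H p.succ q.succ z - c p.succ z * c q.succ z * U z) * z ^ (ν i0) with hSdef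
    set E : ℝ → Matrix (Fin (n+1)) (Fin (n+1)) ℝ := fun z => Ematrix (fun i => c i z) with hEdef
    set B : ℝ → Matrix (Fin (n+1)) (Fin (n+1)) ℝ := fun z => Matrix.of
      (Fin.cases (Fin.cases (Y z 0 0) (fun _ => (0:ℝ)))
        (fun p => Fin.cases (0:ℝ) (fun q => Sf z p q))) with hBdef
    have hEinv : ∀ z, E z * Ematrix (fun i => -(c i z)) = 1 ∧
        Ematrix (fun i => -(c i z)) * E z = 1 := fun z => Ematrix_inv _ (hc0 z)
    have hall : ∀ᶠ z in 𝓝[>] (0:ℝ), ∀ i j, Y z i j = H i j z * z ^ (ν i0) :=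
      eventually_all.2 fun i => eventually_all.2 fun j => hHe i j
    have hYEB : ∀ᶠ z in 𝓝[>] (0:ℝ), Y z = E z * B z * (E z)ᵀ := by
      filter_upwards [hall, hYpos, hUevpos, self_mem_nhdsWithin]
        with z hYH hYp hUz (hz : (0:ℝ) < z)
      have hsym : ∀ j', Y z 0 j' = Y z j' 0 := by
        intro j'
        have h2 := congrFun (congrFun hYp.1 0) j'
        simpa [Matrix.conjTranspose_apply] using h2.symm
      have hUne : U z ≠ 0 := hUz.ne'
      ext i j
      simp only [hEdef]
      rw [mul_EmatrixT_apply, Ematrix_mul_apply, Ematrix_mul_apply]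
      induction i using Fin.cases with
      | zero =>
        induction j using Fin.cases with
        | zero => simp [hBdef, hc0]
        | succ q =>
          simp only [hBdef, Matrix.of_apply, Fin.cases_zero, Fin.cases_succ, hc0]
          rw [hsym q.succ, hYH q.succ 0, hYH 0 0, hcs]
          field_simp
          ring
      | succ p =>
        induction j using Fin.cases with
        | zero =>
          simp only [hBdef, Matrix.of_apply, Fin.cases_zero, Fin.cases_succ, hc0]
          rw [hYH p.succ 0, hYH 0 0, hcs]
          field_simp
          ring
        | succ q =>
          simp only [hBdef, hSdef, Matrix.of_apply, Fin.cases_zero, Fin.cases_succ]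
          rw [hYH p.succ q.succ, hYH 0 0]
          ring
    have hBpos : ∀ᶠ z in 𝓝[>] (0:ℝ), (B z).PosDef := by
      filter_upwards [hYEB, hYpos] with z h1 h2
      obtain ⟨hEi1, hEi2⟩ := hEinv z
      have h3 : (E z)ᵀ * (Ematrix (fun i => -(c i z)))ᵀ = 1 := by
        rw [← Matrix.transpose_mul, hEi2, Matrix.transpose_one]
      have hB' : Ematrix (fun i => -(c i z)) * Y z * (Ematrix (fun i => -(c i z)))ᵀ = B z := by
        rw [h1, Matrix.mul_assoc (E z) (B z) ((E z)ᵀ), ← Matrix.mul_assoc _ (E z) _,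
          hEi2, Matrix.one_mul, Matrix.mul_assoc (B z) _ _, h3, Matrix.mul_one]
      rw [← hB']
      exact posdef_conj h2 hEi2 hEi1
    have hSpos : ∀ᶠ z in 𝓝[>] (0:ℝ), (Sf z).PosDef := by
      filter_upwards [hBpos] with z hB
      have hsub : Sf z = (B z).submatrix Fin.succ Fin.succ := by
        ext p q
        simp [hBdef, Matrix.submatrix_apply]
      rw [hsub]
      exact posdef_submatrix hB Fin.succ (Fin.succ_injective n)
    have hSmer : ∀ p q, MVal (-(-(ν i0))) (fun z => Sf z p q) := by
      intro p q
      rw [neg_neg]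
      exact ⟨fun z => H p.succ q.succ z - c p.succ z * c q.succ z * U z,
        ((hH _ _).sub (((hca _).mul (hca _)).mul (hH 0 0))),
        Eventually.of_forall fun z => rfl⟩
    obtain ⟨κ', hκ'anti, hκ'bd, g', hg'a, hg'unit, hg'eq⟩ := ih (-(ν i0)) Sf hSpos hSmer
    -- assemble
    set κ : Fin (n+1) → ℤ := Fin.cases (-(ν i0)) κ' with hκdef
    have hκanti : Antitone κ := antitone_fin_cases _ _ hκ'anti hκ'bd
    have hκbd : ∀ i, κ i ≤ K := by
      intro i
      induction i using Fin.cases with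
      | zero => have := hνb i0; simp [hκdef]; omega
      | succ p => have := hκ'bd p; have := hνb i0; simp [hκdef]; omega
    set W : ℝ → Matrix (Fin (n+1)) (Fin (n+1)) ℝ := fun z => Matrix.of
      (Fin.cases (Fin.cases (Real.sqrt (U z)) (fun _ => (0:ℝ)))
        (fun p => Fin.cases (0:ℝ) (fun q => g' z p q))) with hWdef
    have hWa : ∀ a b, AnalyticAt ℝ (fun z => W z a b) 0 := by
      intro a b
      induction a using Fin.cases with
      | zero =>
        induction b using Fin.cases with
        | zero =>
          simp only [hWdef, Matrix.of_apply, Fin.cases_zero]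
          exact (my_analyticAt_sqrt hU0pos).comp (hH 0 0)
        | succ q =>
          simp only [hWdef, Matrix.of_apply, Fin.cases_zero, Fin.cases_succ]
          exact analyticAt_const
      | succ p =>
        induction b using Fin.cases with
        | zero =>
          simp only [hWdef, Matrix.of_apply, Fin.cases_zero, Fin.cases_succ]
          exact analyticAt_const
        | succ q =>
          simp only [hWdef, Matrix.of_apply, Fin.cases_succ]
          exact hg'a p q
    have quad : ∀ (m : ℕ) (A : Matrix (Fin m) (Fin m) ℝ) (dd : Fin m → ℝ) i j,
        (A * Matrix.diagonal dd * Aᵀ) i j = ∑ k, A i k * dd k * A j k := by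
      intro m A dd i j
      rw [Matrix.mul_apply]
      simp [Matrix.mul_diagonal, Matrix.transpose_apply]
    have hWDW : ∀ᶠ z in 𝓝[>] (0:ℝ),
        W z * Matrix.diagonal (fun i => z ^ (-(κ i))) * (W z)ᵀ = B z := by
      filter_upwards [hg'eq, hUevpos, hall, self_mem_nhdsWithin]
        with z hg'z hUz hYH (hz : (0:ℝ) < z)
      ext i j
      rw [quad]
      induction i using Fin.cases with
      | zero =>
        induction j using Fin.cases with
        | zero =>
          rw [Fin.sum_univ_succ]
          simp only [hWdef, hBdef, hκdef, Matrix.of_apply, Fin.cases_zero, Fin.cases_succ,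
            neg_neg, mul_zero, zero_mul, Finset.sum_const_zero, add_zero]
          rw [hYH 0 0]
          rw [show Real.sqrt (U z) * z ^ (ν i0) * Real.sqrt (U z)
            = (Real.sqrt (U z) * Real.sqrt (U z)) * z ^ (ν i0) from by ring,
            Real.mul_self_sqrt hUz.le]
        | succ q =>
          rw [Fin.sum_univ_succ]
          simp [hWdef, hBdef, Matrix.of_apply, Fin.cases_zero, Fin.cases_succ]
      | succ p =>
        induction j using Fin.cases with
        | zero =>
          rw [Fin.sum_univ_succ]
          simp [hWdef, hBdef, Matrix.of_apply, Fin.cases_zero, Fin.cases_succ]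
        | succ q =>
          rw [Fin.sum_univ_succ]
          simp only [hWdef, hBdef, hκdef, Matrix.of_apply, Fin.cases_zero, Fin.cases_succ,
            mul_zero, zero_mul, Finset.sum_const_zero, zero_add, mul_one]
          have h2 := congrFun (congrFun hg'z p) q
          rw [quad] at h2
          exact h2.symm
    have hWunit : IsUnit (W 0) := by
      have hs0 : Real.sqrt (U 0) ≠ 0 := (Real.sqrt_pos.2 hU0pos).ne'
      have hginv : g' 0 * (g' 0)⁻¹ = 1 :=
        Matrix.mul_nonsing_inv (g' 0) ((Matrix.isUnit_iff_isUnit_det _).mp hg'unit)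
      apply fun h => @isUnit_of_invertible _ _ (W 0)
        (invertibleOfRightInverse _ _ h)
      show W 0 * (Matrix.of
        (Fin.cases (Fin.cases ((Real.sqrt (U 0))⁻¹) (fun _ => (0:ℝ)))
          (fun p => Fin.cases (0:ℝ) (fun q => (g' 0)⁻¹ p q)))) = 1
      ext i j
      rw [Matrix.mul_apply, Fin.sum_univ_succ]
      induction i using Fin.cases with
      | zero =>
        induction j using Fin.cases with
        | zero =>
          simp [hWdef, Matrix.of_apply, Matrix.one_apply, mul_inv_cancel₀ hs0]
        | succ q =>
          simp [hWdef, Matrix.of_apply, Matrix.one_apply, (Fin.succ_ne_zero q).symm]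
      | succ p =>
        induction j using Fin.cases with
        | zero =>
          simp [hWdef, Matrix.of_apply, Matrix.one_apply, Fin.succ_ne_zero p]
        | succ q =>
          have h2 := congrFun (congrFun hginv p) q
          rw [Matrix.mul_apply] at h2
          simp only [hWdef, Matrix.of_apply, Fin.cases_zero, Fin.cases_succ, zero_mul, zero_add]
          rw [h2]
          simp [Matrix.one_apply, Fin.succ_inj]
    have hEa : ∀ a b, AnalyticAt ℝ (fun z => E z a b) 0 := by
      intro a b
      simp only [hEdef, Ematrix, Matrix.of_apply]
      exact analyticAt_const.add ((hca a).mul analyticAt_const)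
    refine ⟨κ, hκanti, hκbd, fun z => (E z * W z).submatrix σ id, ?_, ?_, ?_⟩
    · intro i j
      have hfun : (fun z => ((E z * W z).submatrix σ id) i j)
          = fun z => ∑ k, E z (σ i) k * W z k j := by
        funext z
        simp [Matrix.submatrix_apply, Matrix.mul_apply]
      rw [hfun]
      exact Finset.analyticAt_fun_sum _ fun k _ => (hEa (σ i) k).mul (hWa k j)
    · have h1 : IsUnit (E 0 * W 0) :=
        (@isUnit_of_invertible _ _ (E 0)
          (invertibleOfRightInverse _ _ (hEinv 0).1)).mul hWunit
      have hdet : IsUnit (E 0 * W 0).det := (Matrix.isUnit_iff_isUnit_det _).mp h1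
      rw [Matrix.isUnit_iff_isUnit_det, Matrix.det_permute]
      exact ((Equiv.Perm.sign σ).isUnit.map (Int.castRingHom ℝ)).mul hdet
    · filter_upwards [hYEB, hWDW] with z h1 h2
      have hfact : Y z = (E z * W z) * Matrix.diagonal (fun i => z ^ (-(κ i))) * (E z * W z)ᵀ := by
        rw [h1, ← h2, Matrix.transpose_mul]
        simp only [Matrix.mul_assoc]
      ext i j
      have hXY : X z i j = Y z (σ i) (σ j) := by
        simp [hY, Matrix.submatrix_apply, hσ, Equiv.swap_apply_self]
      rw [hXY, hfact, quad]
      rw [quad]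
      simp [Matrix.submatrix_apply]

open scoped MatrixOrder in
noncomputable def Matrix.PosSemidef.sqrt {m : ℕ} {M : Matrix (Fin m) (Fin m) ℝ}
    (_ : M.PosSemidef) : Matrix (Fin m) (Fin m) ℝ := CFC.sqrt M

open scoped MatrixOrder in
lemma Matrix.PosSemidef.sqrt_mul_self {m : ℕ} {M : Matrix (Fin m) (Fin m) ℝ}
    (hM : M.PosSemidef) : hM.sqrt * hM.sqrt = M :=
  CFC.sqrt_mul_sqrt_self M hM.nonneg

open scoped MatrixOrder in
lemma Matrix.PosSemidef.posSemidef_sqrt {m : ℕ} {M : Matrix (Fin m) (Fin m) ℝ}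
    (hM : M.PosSemidef) : hM.sqrt.PosSemidef :=
  (CFC.sqrt_nonneg M).posSemidef

/-- Every meromorphic curve of positive definite symmetric matrices (each entry a
convergent Laurent series `z^{-k}(a₀ + a₁ z + …)` on `(0,ε)`) can be written as
`X(z) = g(z)·diag(z^{-k₁},…,z^{-kₙ})·g(z)ᵀ` with `k₁ ≥ … ≥ kₙ` integers and `g`
analytic near `0` with `g(0)` invertible. -/
theorem meromorphic_curve_diagonalization (n : ℕ) (ε : ℝ) (hε : 0 < ε)
    (X : ℝ → Matrix (Fin n) (Fin n) ℝ)
    (hpos : ∀ z ∈ Set.Ioo (0:ℝ) ε, (X z).PosDef)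
    (hmer : ∀ i j : Fin n, ∃ (k : ℕ) (f : ℝ → ℝ), AnalyticAt ℝ f 0 ∧
      ∀ z ∈ Set.Ioo (0:ℝ) ε, X z i j = f z / z ^ k) :
    ∃ (κ : Fin n → ℤ), Antitone κ ∧
      ∃ g : ℝ → Matrix (Fin n) (Fin n) ℝ,
        (∀ i j : Fin n, AnalyticAt ℝ (fun z => g z i j) 0) ∧
        IsUnit (g 0) ∧
        ∀ z ∈ Set.Ioo (0:ℝ) ε,
          X z = g z * Matrix.diagonal (fun i => z ^ (-(κ i))) * (g z)ᵀ := by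
  classical
  have hIoo : Set.Ioo (0:ℝ) ε ∈ 𝓝[>] (0:ℝ) := Ioo_mem_nhdsGT_of_mem ⟨le_refl 0, hε⟩
  have hposev : ∀ᶠ z in 𝓝[>] (0:ℝ), (X z).PosDef := by
    filter_upwards [hIoo] with z hz using hpos z hz
  choose k f hf hfe using hmer
  set K : ℕ := Finset.univ.sup (fun p : Fin n × Fin n => k p.1 p.2) with hK
  have hmv : ∀ i j, MVal (-(K:ℤ)) (fun z => X z i j) := by
    intro i j
    have h1 : MVal (-(k i j : ℤ)) (fun z => X z i j) := by
      refine ⟨f i j, hf i j, ?_⟩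
      filter_upwards [hIoo, self_mem_nhdsWithin] with z hz (hz2 : (0:ℝ) < z)
      rw [hfe i j z hz, div_eq_mul_inv, ← zpow_natCast z (k i j), ← _root_.zpow_neg]
    refine h1.mono ?_
    have : k i j ≤ K := Finset.le_sup (f := fun p : Fin n × Fin n => k p.1 p.2)
      (Finset.mem_univ (i,j))
    omega
  obtain ⟨κ, hanti, hbd, g, hga, hgu, hge⟩ := core n (K:ℤ) X hposev hmv
  obtain ⟨δ, hδpos, hδ⟩ := mem_nhdsGT_iff_exists_Ioo_subset.mp hge
  set cδ : ℝ := min δ ε with hcδ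
  have hc : 0 < cδ := lt_min hδpos hε
  refine ⟨κ, hanti, fun z => if z < cδ then g z else (if hz : z ∈ Set.Ioo (0:ℝ) ε then
      ((hpos z hz).posSemidef.sqrt * Matrix.diagonal (fun i => Real.sqrt (z ^ (κ i))))
      else 1), ?_, ?_, ?_⟩
  · intro i j
    apply (hga i j).congr
    filter_upwards [eventually_lt_nhds hc] with z hz
    simp [hz]
  · simp only [hc, if_true]
    exact hgu
  · intro z hz
    beta_reduce
    by_cases hzc : z < cδ
    · rw [if_pos hzc]
      exact hδ ⟨hz.1, lt_of_lt_of_le hzc (min_le_left _ _)⟩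
    · rw [if_neg hzc, dif_pos hz]
      set Q := (hpos z hz).posSemidef.sqrt with hQdef
      have hQ : Q * Q = X z := (hpos z hz).posSemidef.sqrt_mul_self
      have hQt : Qᵀ = Q := by
        have h2 : Qᴴ = Q := (hpos z hz).posSemidef.posSemidef_sqrt.1
        rwa [Matrix.conjTranspose_eq_transpose_of_trivial] at h2
      have hzpos := hz.1
      have hdd : Matrix.diagonal (fun i => Real.sqrt (z ^ (κ i)))
          * Matrix.diagonal (fun i => z ^ (-(κ i)))
          * (Matrix.diagonal (fun i => Real.sqrt (z ^ (κ i))))ᵀ = 1 := by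
        rw [Matrix.diagonal_transpose, Matrix.diagonal_mul_diagonal,
          Matrix.diagonal_mul_diagonal]
        have hone : ∀ i, Real.sqrt (z ^ (κ i)) * z ^ (-(κ i)) * Real.sqrt (z ^ (κ i)) = 1 := by
          intro i
          have h1 : (0:ℝ) < z ^ (κ i) := zpow_pos hzpos _
          rw [show Real.sqrt (z ^ (κ i)) * z ^ (-(κ i)) * Real.sqrt (z ^ (κ i))
            = (Real.sqrt (z ^ (κ i)) * Real.sqrt (z ^ (κ i))) * z ^ (-(κ i)) from by ring,
            Real.mul_self_sqrt h1.le, _root_.zpow_neg, mul_inv_cancel₀ h1.ne']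
        rw [show (fun i => Real.sqrt (z ^ (κ i)) * z ^ (-(κ i)) * Real.sqrt (z ^ (κ i)))
          = fun _ => (1:ℝ) from funext hone, Matrix.diagonal_one]
      calc X z = Q * 1 * Q := by rw [Matrix.mul_one, hQ]
        _ = Q * (Matrix.diagonal (fun i => Real.sqrt (z ^ (κ i)))
            * Matrix.diagonal (fun i => z ^ (-(κ i)))
            * (Matrix.diagonal (fun i => Real.sqrt (z ^ (κ i))))ᵀ) * Q := by rw [hdd]
        _ = (Q * Matrix.diagonal (fun i => Real.sqrt (z ^ (κ i))))
            * Matrix.diagonal (fun i => z ^ (-(κ i)))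
            * (Q * Matrix.diagonal (fun i => Real.sqrt (z ^ (κ i))))ᵀ := by
          rw [Matrix.transpose_mul, hQt]
          simp only [Matrix.mul_assoc]
end
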